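/- arXiv:2007.14925 — 7 statements merged into one kernel-verified Lean document; each statement's English description precedes it below -/
import Mathlib

section
/- Representation formula: let f : Ω_D → ℍ be a slice function and let y = (α₁+I₁β₁,…,αₙ+Iₙβₙ) ∈ Ω_D with α_h,β_h ∈ ℝ and I_h ∈ 𝕊. Then for every x = (α₁+J₁β₁,…,αₙ+Jₙβₙ) ∈ Ω_D with the same α_h,β_h and arbitrary J_h ∈ 𝕊, one has f(x) = 2^{−n} ∑_{K,H∈𝒫(n)} (−1)^{|K∩H|} J_K ((I_K)^{−1} f(y^{c,H})). Moreover, if F = (F_K)_K is a stem function inducing f, then F_K(z) = 2^{−n} ∑_{H∈𝒫(n)} (−1)^{|K∩H|} (I_K)^{−1} f(y^{c,H}) for every K ∈ 𝒫(n), where z = (α₁+iβ₁,…,αₙ+iβₙ) ∈ D; in particular every slice function is induced by a unique stem function. -/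
noncomputable section

abbrev ℍ := Quaternion ℝ

/-- The sphere of quaternionic imaginary units. -/
def Sph : Set ℍ := {J | J ^ 2 = -1}

/-- The complex slice `ℂ_J = {a + b J : a b : ℝ}`. -/
def CJ (J : ℍ) : Set ℍ := {x | ∃ a b : ℝ, x = (a : ℍ) + (b : ℍ) * J}

variable {n : ℕ}

/-- Conjugation of the `h`-th complex coordinate. -/
def conjCoord (h : Fin n) (z : Fin n → ℂ) : Fin n → ℂ :=
  Function.update z h (starRingEnd ℂ (z h))

/-- Quaternionic conjugation of the coordinates with index in `H`. -/
def conjQ (H : Finset (Fin n)) (x : Fin n → ℍ) : Fin n → ℍ :=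
  fun h => if h ∈ H then star (x h) else x h

/-- Ordered product `J_K` of the values of `J` over `K`, in increasing index order. -/
def JK (J : Fin n → ℍ) (K : Finset (Fin n)) : ℍ :=
  ((K.sort (· ≤ ·)).map J).prod

/-- The complex point with coordinates `α h + i β h`. -/
def zOf (α β : Fin n → ℝ) : Fin n → ℂ :=
  fun h => (α h : ℂ) + (β h : ℂ) * Complex.I

/-- The quaternionic point with coordinates `α h + β h * J h`. -/
def ptOf (α β : Fin n → ℝ) (J : Fin n → ℍ) : Fin n → ℍ :=
  fun h => (α h : ℍ) + (β h : ℍ) * J h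

/-- The circularization `Ω_D` of `D ⊆ ℂⁿ` in `ℍⁿ`. -/
def OmegaD (D : Set (Fin n → ℂ)) : Set (Fin n → ℍ) :=
  {x | ∃ α β : Fin n → ℝ, ∃ J : Fin n → ℍ,
    (∀ h, J h ∈ Sph) ∧ x = ptOf α β J ∧ zOf α β ∈ D}

/-- Invariance of `D` under all coordinatewise complex conjugations. -/
def ConjInv (D : Set (Fin n → ℂ)) : Prop :=
  ∀ h : Fin n, ∀ z ∈ D, conjCoord h z ∈ D

/-- Stem function condition for a family `F = (F_K)`. -/
def IsStem (D : Set (Fin n → ℂ)) (F : Finset (Fin n) → (Fin n → ℂ) → ℍ) : Prop :=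
  ∀ (K : Finset (Fin n)) (h : Fin n), ∀ z ∈ D,
    F K (conjCoord h z) = (if h ∈ K then -1 else 1) * F K z

/-- `f` is the slice function induced by the stem function `F` on `Ω_D`. -/
def Induces (D : Set (Fin n → ℂ)) (F : Finset (Fin n) → (Fin n → ℂ) → ℍ)
    (f : (Fin n → ℍ) → ℍ) : Prop :=
  ∀ (α β : Fin n → ℝ) (J : Fin n → ℍ), (∀ h, J h ∈ Sph) → zOf α β ∈ D →
    f (ptOf α β J) = ∑ K : Finset (Fin n), JK J K * F K (zOf α β)

/-- `f` is a slice function on `Ω_D`. -/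
def IsSlice (D : Set (Fin n → ℂ)) (f : (Fin n → ℍ) → ℍ) : Prop :=
  ∃ F, IsStem D F ∧ Induces D F f

/-- Each component of the stem function is of class `C¹` on `D`. -/
def StemC1 (D : Set (Fin n → ℂ)) (F : Finset (Fin n) → (Fin n → ℂ) → ℍ) : Prop :=
  ∀ K, ContDiffOn ℝ 1 (F K) D

/-- Holomorphy (Cauchy–Riemann system) of a stem function. -/
def StemHolo (D : Set (Fin n → ℂ)) (F : Finset (Fin n) → (Fin n → ℂ) → ℍ) : Prop :=
  ∀ z ∈ D, ∀ h : Fin n, ∀ K : Finset (Fin n), h ∉ K →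
    fderiv ℝ (F K) z (Pi.single h 1) =
      fderiv ℝ (F (insert h K)) z (Pi.single h Complex.I) ∧
    fderiv ℝ (F K) z (Pi.single h Complex.I) =
      -fderiv ℝ (F (insert h K)) z (Pi.single h 1)

/-- `f` is a slice regular function on `Ω_D`. -/
def IsSliceRegular (D : Set (Fin n → ℂ)) (f : (Fin n → ℍ) → ℍ) : Prop :=
  ∃ F, IsStem D F ∧ StemC1 D F ∧ StemHolo D F ∧ Induces D F f

/-- Pointwise product of stem functions associated with `σ`. -/
def SP (σ : Finset (Fin n) → Finset (Fin n) → ℝ)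
    (F G : Finset (Fin n) → (Fin n → ℂ) → ℍ) :
    Finset (Fin n) → (Fin n → ℂ) → ℍ :=
  fun K z => ∑ H : Finset (Fin n), ∑ L : Finset (Fin n),
    if symmDiff H L = K then σ H L • (F H z * G L z) else 0

/-- The tensor-product sign function `σ_⊗(K,H) = (-1)^{|K∩H|}`. -/
def sigmaT : Finset (Fin n) → Finset (Fin n) → ℝ :=
  fun K H => (-1 : ℝ) ^ (K ∩ H).card

/-- The tensor (slice) product of stem functions. -/
def SPT (F G : Finset (Fin n) → (Fin n → ℂ) → ℍ) :
    Finset (Fin n) → (Fin n → ℂ) → ℍ := SP sigmaT F G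

/-- The stem function `∂_h F`. -/
def Dplus (F : Finset (Fin n) → (Fin n → ℂ) → ℍ) (h : Fin n) :
    Finset (Fin n) → (Fin n → ℂ) → ℍ :=
  fun K z => (2 : ℝ)⁻¹ • (fderiv ℝ (F K) z (Pi.single h 1) +
    ((-1 : ℝ) ^ (K ∩ {h}).card) •
      fderiv ℝ (F (symmDiff K {h})) z (Pi.single h Complex.I))

/-- The stem function `∂̄_h F`. -/
def Dminus (F : Finset (Fin n) → (Fin n → ℂ) → ℍ) (h : Fin n) :
    Finset (Fin n) → (Fin n → ℂ) → ℍ :=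
  fun K z => (2 : ℝ)⁻¹ • (fderiv ℝ (F K) z (Pi.single h 1) -
    ((-1 : ℝ) ^ (K ∩ {h}).card) •
      fderiv ℝ (F (symmDiff K {h})) z (Pi.single h Complex.I))

/-- The ordered monomial function `x ↦ x^ℓ a = x₁^{ℓ₁} ⋯ xₙ^{ℓₙ} a`. -/
def mono (ℓ : Fin n → ℕ) (a : ℍ) (x : Fin n → ℍ) : ℍ :=
  (List.ofFn fun h => x h ^ ℓ h).prod * a

/-- The coordinatewise map `φ_J : ℂⁿ → (ℂ_J)ⁿ ⊆ ℍⁿ`. -/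
def phiJ (J : ℍ) (z : Fin n → ℂ) : Fin n → ℍ :=
  fun h => ((z h).re : ℍ) + ((z h).im : ℍ) * J

/-- The standard basis vector `e_K` of `ℝ^{𝒫(n)}`. -/
def eB (K : Finset (Fin n)) : Finset (Fin n) → ℝ := Pi.single K 1

/-- The `Δ`-product on `ℝ^{𝒫(n)}` associated with `σ`. -/
def deltaMulR (σ : Finset (Fin n) → Finset (Fin n) → ℝ)
    (v w : Finset (Fin n) → ℝ) : Finset (Fin n) → ℝ :=
  fun K => ∑ H : Finset (Fin n), ∑ L : Finset (Fin n),
    if symmDiff H L = K then σ H L * v H * w L else 0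


lemma sph_re_zero {J : ℍ} (hJ : J ∈ Sph) : J.re = 0 := by
  have h := hJ
  simp only [Sph, Set.mem_setOf_eq, pow_two] at h
  have hre := congrArg QuaternionAlgebra.re h
  have hi := congrArg QuaternionAlgebra.imI h
  have hj := congrArg QuaternionAlgebra.imJ h
  have hk := congrArg QuaternionAlgebra.imK h
  simp [Quaternion.re_mul, Quaternion.imI_mul, Quaternion.imJ_mul, Quaternion.imK_mul,
    Quaternion.re_one, Quaternion.imI_one, Quaternion.imJ_one, Quaternion.imK_one]
    at hre hi hj hk
  nlinarith [sq_nonneg J.re, sq_nonneg J.imI, sq_nonneg J.imJ, sq_nonneg J.imK]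

lemma sph_star {J : ℍ} (hJ : J ∈ Sph) : star J = -J := by
  ext <;> simp [Quaternion.re_star, sph_re_zero hJ]

lemma sph_neg {J : ℍ} (hJ : J ∈ Sph) : -J ∈ Sph := by
  simpa [Sph, neg_pow, pow_two] using hJ

lemma conjQ_ptOf (α β : Fin n → ℝ) (I : Fin n → ℍ) (hI : ∀ h, I h ∈ Sph)
    (H : Finset (Fin n)) :
    conjQ H (ptOf α β I) = ptOf α β (fun h => if h ∈ H then -I h else I h) := by
  funext h
  simp only [conjQ, ptOf]
  by_cases hh : h ∈ H
  · simp [hh, sph_star (hI h), Quaternion.star_coe, mul_neg, Quaternion.coe_commutes]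
  · simp [hh]

lemma quatI_sph : (⟨0,1,0,0⟩ : ℍ) ∈ Sph := by
  simp only [Sph, Set.mem_setOf_eq, pow_two]
  show ((⟨0,1,0,0⟩ : ℍ) * (⟨0,1,0,0⟩ : ℍ) = -1)
  ext <;> simp [Quaternion.re_mul, Quaternion.imI_mul, Quaternion.imJ_mul, Quaternion.imK_mul,
    Quaternion.re_one, Quaternion.imI_one, Quaternion.imJ_one, Quaternion.imK_one]

lemma zOf_reim (z : Fin n → ℂ) : zOf (fun h => (z h).re) (fun h => (z h).im) = z := by
  funext h; simp [zOf, Complex.re_add_im]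

def chi (S H : Finset (Fin n)) : ℝ := ∏ i ∈ H, (if i ∈ S then (-1:ℝ) else 1)

lemma chi_eq (S H : Finset (Fin n)) : chi S H = (-1:ℝ)^((S ∩ H).card) := by
  rw [chi, Finset.prod_ite_mem, Finset.prod_const, Finset.inter_comm]

lemma chi_mul (K L H : Finset (Fin n)) : chi K H * chi L H = chi (symmDiff K L) H := by
  rw [chi, chi, chi, ← Finset.prod_mul_distrib]
  refine Finset.prod_congr rfl fun i _ => ?_
  by_cases hK : i ∈ K <;> by_cases hL : i ∈ L <;>
    simp [Finset.mem_symmDiff, hK, hL]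

lemma sum_chi (S : Finset (Fin n)) :
    ∑ H : Finset (Fin n), chi S H = if S = ∅ then (2:ℝ)^n else 0 := by
  have h1 : ∑ H : Finset (Fin n), chi S H
      = ∑ H ∈ (Finset.univ : Finset (Fin n)).powerset,
          (∏ i ∈ H, (if i ∈ S then (-1:ℝ) else 1)) * ∏ i ∈ Finset.univ \ H, (1:ℝ) := by
    rw [Finset.powerset_univ]; simp [chi]
  rw [h1, ← Finset.prod_add]
  have h2 : ∀ i : Fin n, ((if i ∈ S then (-1:ℝ) else 1) + 1) = if i ∈ S then 0 else 2 := by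
    intro i; by_cases h : i ∈ S <;> simp [h]; norm_num
  simp_rw [h2]
  rw [Finset.prod_ite, Finset.prod_const, Finset.prod_const]
  simp only [Finset.filter_mem_eq_inter, Finset.univ_inter]
  by_cases h : S = ∅
  · simp [h, Finset.card_univ]
  · rw [if_neg h, zero_pow (by simpa [Finset.card_eq_zero] using h), zero_mul]

lemma list_prod_flip (J : Fin n → ℍ) (H : Finset (Fin n)) (l : List (Fin n)) :
    ((l.map (fun h => if h ∈ H then -J h else J h)).prod)
      = ((-1:ℝ)^(l.countP (· ∈ H))) • (l.map J).prod := by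
  induction l with
  | nil => simp
  | cons a l ih =>
    simp only [List.map_cons, List.prod_cons, List.countP_cons, ih]
    by_cases h : a ∈ H
    · simp [h, pow_succ, mul_smul, smul_smul, mul_smul_comm, smul_mul_assoc]
    · simp [h, mul_smul_comm]

lemma countP_sort (K H : Finset (Fin n)) :
    ((K.sort (· ≤ ·)).countP (· ∈ H)) = (K ∩ H).card := by
  have h1 : ((K.sort (· ≤ ·)) : Multiset (Fin n)) = K.val := Finset.sort_eq _ _
  rw [← Finset.filter_mem_eq_inter, Finset.card, Finset.filter_val,
    ← Multiset.countP_eq_card_filter, ← h1, Multiset.coe_countP]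

lemma JK_flip (J : Fin n → ℍ) (H K : Finset (Fin n)) :
    JK (fun h => if h ∈ H then -J h else J h) K = chi K H • JK J K := by
  rw [JK, JK, list_prod_flip, countP_sort, chi_eq]

lemma JK_ne_zero {J : Fin n → ℍ} (hJ : ∀ h, J h ∈ Sph) (K : Finset (Fin n)) :
    JK J K ≠ 0 := by
  rw [JK]
  apply List.prod_ne_zero
  intro hx
  simp only [List.mem_map] at hx
  obtain ⟨a, _, h0⟩ := hx
  have := hJ a
  rw [Sph, Set.mem_setOf_eq, h0] at this
  simp at this

lemma coe_two : ((2:ℝ):ℍ) = 2 := by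
  ext <;> simp [show (2:ℍ) = 1+1 from one_add_one_eq_two.symm, Quaternion.re_one,
    Quaternion.imI_one, Quaternion.imJ_one, Quaternion.imK_one] <;> norm_num

lemma two_ne : (2:ℍ) ≠ 0 := by
  rw [← coe_two, show (0:ℍ) = ((0:ℝ):ℍ) by simp]
  rw [ne_eq, Quaternion.coe_inj]
  norm_num

lemma negpow_mul (m : ℕ) (x : ℍ) : (-1 : ℍ)^m * x = ((-1:ℝ)^m) • x := by
  have : ((-1:ℝ)^m : ℝ) • x = (((-1:ℝ)^m : ℝ) : ℍ) * x :=
    (Quaternion.coe_mul_eq_smul _ _).symm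
  rw [this]; push_cast; ring_nf

/-- Core representation formula for the stem components. -/
lemma main_rep (D : Set (Fin n → ℂ)) (f : (Fin n → ℍ) → ℍ)
    (F : Finset (Fin n) → (Fin n → ℂ) → ℍ) (hind : Induces D F f)
    (α β : Fin n → ℝ) (I : Fin n → ℍ) (hI : ∀ h, I h ∈ Sph) (hz : zOf α β ∈ D)
    (K : Finset (Fin n)) :
    F K (zOf α β) = ((2 : ℍ) ^ n)⁻¹ * ∑ H : Finset (Fin n),
      (-1 : ℍ) ^ ((K ∩ H).card) * ((JK I K)⁻¹ * f (conjQ H (ptOf α β I))) := by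
  set z := zOf α β with hzdef
  have hfc : ∀ H : Finset (Fin n),
      f (conjQ H (ptOf α β I)) = ∑ L : Finset (Fin n), chi L H • (JK I L * F L z) := by
    intro H
    rw [conjQ_ptOf α β I hI H,
      hind α β _ (fun h => by by_cases hh : h ∈ H <;> simp [hh, sph_neg (hI h), hI h]) hz]
    exact Finset.sum_congr rfl fun L _ => by rw [JK_flip, smul_mul_assoc]
  have key : ∑ H : Finset (Fin n),
      (-1 : ℍ) ^ ((K ∩ H).card) * ((JK I K)⁻¹ * f (conjQ H (ptOf α β I)))
      = ((2:ℝ)^n) • F K z := by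
    calc ∑ H : Finset (Fin n),
        (-1 : ℍ) ^ ((K ∩ H).card) * ((JK I K)⁻¹ * f (conjQ H (ptOf α β I)))
        = ∑ H : Finset (Fin n), ∑ L : Finset (Fin n),
            (chi K H * chi L H) • ((JK I K)⁻¹ * (JK I L * F L z)) := by
          refine Finset.sum_congr rfl fun H _ => ?_
          rw [negpow_mul, ← chi_eq, hfc H, Finset.mul_sum, Finset.smul_sum]
          refine Finset.sum_congr rfl fun L _ => ?_
          rw [mul_smul_comm, smul_smul]
      _ = ∑ L : Finset (Fin n), (∑ H : Finset (Fin n), chi (symmDiff K L) H)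
            • ((JK I K)⁻¹ * (JK I L * F L z)) := by
          rw [Finset.sum_comm]
          refine Finset.sum_congr rfl fun L _ => ?_
          rw [Finset.sum_smul]
          exact Finset.sum_congr rfl fun H _ => by rw [chi_mul]
      _ = ∑ L : Finset (Fin n), (if symmDiff K L = ∅ then (2:ℝ)^n else 0)
            • ((JK I K)⁻¹ * (JK I L * F L z)) := by
          exact Finset.sum_congr rfl fun L _ => by rw [sum_chi]
      _ = ∑ L : Finset (Fin n), (if L = K then (2:ℝ)^n else 0)
            • ((JK I K)⁻¹ * (JK I L * F L z)) := by
          refine Finset.sum_congr rfl fun L _ => ?_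
          congr 1
          have : symmDiff K L = ∅ ↔ L = K := by
            rw [← Finset.bot_eq_empty, symmDiff_eq_bot, eq_comm]
          simp [this]
      _ = ((2:ℝ)^n) • ((JK I K)⁻¹ * (JK I K * F K z)) := by
          rw [Finset.sum_eq_single K (fun L _ hLK => by rw [if_neg hLK, zero_smul])
            (fun h => absurd (Finset.mem_univ K) h), if_pos rfl]
      _ = ((2:ℝ)^n) • F K z := by
          rw [inv_mul_cancel_left₀ (JK_ne_zero hI K)]
  rw [key]
  have h2 : ((2:ℝ)^n : ℝ) • F K z = ((2:ℍ)^n) * F K z := by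
    rw [← Quaternion.coe_mul_eq_smul, Quaternion.coe_pow, coe_two]
  rw [h2, ← mul_assoc, inv_mul_cancel₀ (pow_ne_zero n two_ne), one_mul]

lemma invtwo_mul {n : ℕ} (x : ℍ) : ((2:ℍ)^n)⁻¹ * x = (((2:ℝ)^n)⁻¹) • x := by
  rw [← Quaternion.coe_mul_eq_smul, Quaternion.coe_inv, Quaternion.coe_pow, coe_two]

/-- **Representation formula.** -/
theorem stmt1 (n : ℕ) (hn : 0 < n) (D : Set (Fin n → ℂ)) (hne : D.Nonempty)
    (hinv : ConjInv D) (f : (Fin n → ℍ) → ℍ) (hf : IsSlice D f)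
    (α β : Fin n → ℝ) (I : Fin n → ℍ) (hI : ∀ h, I h ∈ Sph)
    (hz : zOf α β ∈ D) :
    (∀ J : Fin n → ℍ, (∀ h, J h ∈ Sph) →
      f (ptOf α β J) =
        ((2 : ℍ) ^ n)⁻¹ * ∑ K : Finset (Fin n), ∑ H : Finset (Fin n),
          (-1 : ℍ) ^ ((K ∩ H).card) *
            (JK J K * ((JK I K)⁻¹ * f (conjQ H (ptOf α β I))))) ∧
    (∀ F, IsStem D F → Induces D F f → ∀ K : Finset (Fin n),
      F K (zOf α β) =
        ((2 : ℍ) ^ n)⁻¹ * ∑ H : Finset (Fin n),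
          (-1 : ℍ) ^ ((K ∩ H).card) * ((JK I K)⁻¹ * f (conjQ H (ptOf α β I)))) ∧
    (∀ F G, IsStem D F → Induces D F f → IsStem D G → Induces D G f →
      ∀ K : Finset (Fin n), ∀ z ∈ D, F K z = G K z) := by
  refine ⟨?_, ?_, ?_⟩
  · -- part 1
    obtain ⟨F, hFs, hFi⟩ := hf
    intro J hJ
    rw [hFi α β J hJ hz]
    have hrep := fun K => main_rep D f F hFi α β I hI hz K
    calc ∑ K : Finset (Fin n), JK J K * F K (zOf α β)
        = ∑ K : Finset (Fin n), JK J K * ((((2:ℝ)^n)⁻¹) • ∑ H : Finset (Fin n),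
            ((-1:ℝ) ^ ((K ∩ H).card)) • ((JK I K)⁻¹ * f (conjQ H (ptOf α β I)))) := by
          refine Finset.sum_congr rfl fun K _ => ?_
          rw [hrep K, invtwo_mul]
          exact congrArg (fun s => JK J K * (((2:ℝ)^n)⁻¹ • s))
            (Finset.sum_congr rfl fun H _ => negpow_mul _ _)
      _ = (((2:ℝ)^n)⁻¹) • ∑ K : Finset (Fin n), ∑ H : Finset (Fin n),
            ((-1:ℝ) ^ ((K ∩ H).card)) •
              (JK J K * ((JK I K)⁻¹ * f (conjQ H (ptOf α β I)))) := by
          rw [Finset.smul_sum]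
          refine Finset.sum_congr rfl fun K _ => ?_
          rw [mul_smul_comm, Finset.mul_sum]
          congr 1
          exact Finset.sum_congr rfl fun H _ => (mul_smul_comm _ _ _)
      _ = ((2 : ℍ) ^ n)⁻¹ * ∑ K : Finset (Fin n), ∑ H : Finset (Fin n),
            (-1 : ℍ) ^ ((K ∩ H).card) *
              (JK J K * ((JK I K)⁻¹ * f (conjQ H (ptOf α β I)))) := by
          rw [invtwo_mul]
          congr 1
          refine Finset.sum_congr rfl fun K _ => Finset.sum_congr rfl fun H _ => ?_
          rw [negpow_mul]
  · -- part 2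
    intro F _ hFi K
    exact main_rep D f F hFi α β I hI hz K
  · -- part 3
    intro F G _ hFi _ hGi K z hzD
    have hz' : zOf (fun h => (z h).re) (fun h => (z h).im) ∈ D := by
      rw [zOf_reim]; exact hzD
    have h1 := main_rep D f F hFi (fun h => (z h).re) (fun h => (z h).im)
      (fun _ => ⟨0,1,0,0⟩) (fun _ => quatI_sph) hz' K
    have h2 := main_rep D f G hGi (fun h => (z h).re) (fun h => (z h).im)
      (fun _ => ⟨0,1,0,0⟩) (fun _ => quatI_sph) hz' K
    rw [zOf_reim] at h1 h2
    rw [h1, h2]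
end
end

section
/- Identity principle: let f, g : Ω_D → ℍ be slice functions, and suppose there exist I₁,…,Iₙ ∈ 𝕊 such that f = g on Ω_D ∩ (ℂ_{I₁}×⋯×ℂ_{Iₙ}). Then f = g on the whole Ω_D. -/
noncomputable section

variable {n : ℕ}

namespace Stmt2Aux

variable {n : ℕ}

/-- Sign `(-1)^{|K ∩ S|}` in product form. -/
def sgn (K S : Finset (Fin n)) : ℝ := ∏ h ∈ S, (if h ∈ K then (-1:ℝ) else 1)

/-- Negate `β` on the coordinates in `S`. -/
def negOn (β : Fin n → ℝ) (S : Finset (Fin n)) : Fin n → ℝ :=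
  fun h => if h ∈ S then -β h else β h

lemma negOn_empty (β : Fin n → ℝ) : negOn β ∅ = β := by
  funext h; simp [negOn]

lemma sgn_empty (K : Finset (Fin n)) : sgn K ∅ = 1 := by simp [sgn]

lemma sgn_insert (K S : Finset (Fin n)) (a : Fin n) (ha : a ∉ S) :
    sgn K (insert a S) = (if a ∈ K then (-1:ℝ) else 1) * sgn K S := by
  simp [sgn, Finset.prod_insert ha]

lemma sgn_mul_sgn (K L S : Finset (Fin n)) :
    sgn K S * sgn L S = sgn (symmDiff K L) S := by
  unfold sgn
  rw [← Finset.prod_mul_distrib]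
  refine Finset.prod_congr rfl fun h _ => ?_
  by_cases hK : h ∈ K <;> by_cases hL : h ∈ L <;>
    simp [hK, hL, Finset.mem_symmDiff]

lemma sum_sgn (M : Finset (Fin n)) :
    ∑ S : Finset (Fin n), sgn M S = if M = ∅ then (2:ℝ)^n else 0 := by
  have h1 : ∏ h : Fin n, ((if h ∈ M then (-1:ℝ) else 1) + 1)
      = ∑ S : Finset (Fin n), sgn M S := by
    rw [Finset.prod_add, Finset.powerset_univ]
    exact Finset.sum_congr rfl fun S _ => by simp [sgn]
  rw [← h1]
  by_cases hM : M = ∅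
  · simp only [hM, if_pos]
    norm_num [Finset.prod_const, Finset.card_univ]
  · obtain ⟨a, ha⟩ := Finset.nonempty_iff_ne_empty.mpr hM
    rw [Finset.prod_eq_zero (Finset.mem_univ a) (by simp [ha]), if_neg hM]

lemma sgn_orth (K L : Finset (Fin n)) :
    ∑ S : Finset (Fin n), sgn K S * sgn L S = if K = L then (2:ℝ)^n else 0 := by
  have hKL : (symmDiff K L = ∅) ↔ K = L := by
    rw [← Finset.bot_eq_empty, symmDiff_eq_bot]
  simp_rw [sgn_mul_sgn, sum_sgn, hKL]

lemma zOf_negOn_insert (α β : Fin n → ℝ) (S : Finset (Fin n)) (a : Fin n)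
    (ha : a ∉ S) :
    zOf α (negOn β (insert a S)) = conjCoord a (zOf α (negOn β S)) := by
  funext k
  by_cases hk : k = a
  · subst hk
    simp only [zOf, negOn, conjCoord, Function.update_self, Finset.mem_insert,
      if_pos (Or.inl rfl), if_neg ha, map_add, map_mul, Complex.conj_ofReal,
      Complex.conj_I]
    simp only [true_or, if_true]
    push_cast
    ring
  · simp only [zOf, negOn, conjCoord, Function.update_of_ne hk,
      Finset.mem_insert]
    have : (k ∈ insert a S) ↔ k ∈ S := by simp [hk]
    by_cases hkS : k ∈ S <;> simp [hk, hkS]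

lemma stem_negOn {D : Set (Fin n → ℂ)} (hinv : ConjInv D)
    {F : Finset (Fin n) → (Fin n → ℂ) → ℍ} (hF : IsStem D F)
    (α β : Fin n → ℝ) (hz : zOf α β ∈ D) (S : Finset (Fin n)) :
    zOf α (negOn β S) ∈ D ∧
      ∀ K, F K (zOf α (negOn β S)) = sgn K S • F K (zOf α β) := by
  induction S using Finset.induction_on with
  | empty =>
      refine ⟨by simpa [negOn_empty] using hz, fun K => by simp [negOn_empty, sgn_empty]⟩
  | @insert a S ha ih =>
      obtain ⟨hmem, hval⟩ := ih
      rw [zOf_negOn_insert α β S a ha]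
      refine ⟨hinv a _ hmem, fun K => ?_⟩
      have hstem := hF K a _ hmem
      rw [hstem, hval K, sgn_insert K S a ha, mul_smul]
      by_cases haK : a ∈ K <;> simp [haK, neg_smul]

end Stmt2Aux

open Stmt2Aux in
/-- **Identity principle.** -/
theorem stmt2 (n : ℕ) (hn : 0 < n) (D : Set (Fin n → ℂ)) (hne : D.Nonempty)
    (hinv : ConjInv D) (f g : (Fin n → ℍ) → ℍ)
    (hf : IsSlice D f) (hg : IsSlice D g)
    (I : Fin n → ℍ) (hI : ∀ h, I h ∈ Sph)
    (heq : ∀ x ∈ OmegaD D, (∀ h, x h ∈ CJ (I h)) → f x = g x) :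
    ∀ x ∈ OmegaD D, f x = g x := by
  obtain ⟨F, hFstem, hFind⟩ := hf
  obtain ⟨G, hGstem, hGind⟩ := hg
  have key : ∀ α β : Fin n → ℝ, zOf α β ∈ D →
      ∀ K, F K (zOf α β) = G K (zOf α β) := by
    intro α β hz K
    set z := zOf α β with hzdef
    set c : Finset (Fin n) → ℍ := fun L => JK I L * F L z - JK I L * G L z
      with hc
    have hS : ∀ S : Finset (Fin n), ∑ L : Finset (Fin n), sgn L S • c L = 0 := by
      intro S
      have hFd := stem_negOn hinv hFstem α β hz S
      have hGd := stem_negOn hinv hGstem α β hz S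
      have hpt : ptOf α (negOn β S) I ∈ OmegaD D :=
        ⟨α, negOn β S, I, hI, rfl, hFd.1⟩
      have hCJ : ∀ h, ptOf α (negOn β S) I h ∈ CJ (I h) :=
        fun h => ⟨α h, negOn β S h, rfl⟩
      have hfg := heq _ hpt hCJ
      rw [hFind α (negOn β S) I hI hFd.1, hGind α (negOn β S) I hI hGd.1] at hfg
      have hfg' : ∑ L : Finset (Fin n), sgn L S • (JK I L * F L z)
          = ∑ L : Finset (Fin n), sgn L S • (JK I L * G L z) := by
        calc ∑ L : Finset (Fin n), sgn L S • (JK I L * F L z)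
            = ∑ L : Finset (Fin n), JK I L * F L (zOf α (negOn β S)) := by
              refine Finset.sum_congr rfl fun L _ => ?_
              rw [hFd.2 L, mul_smul_comm]
          _ = ∑ L : Finset (Fin n), JK I L * G L (zOf α (negOn β S)) := hfg
          _ = ∑ L : Finset (Fin n), sgn L S • (JK I L * G L z) := by
              refine Finset.sum_congr rfl fun L _ => ?_
              rw [hGd.2 L, mul_smul_comm]
      simp only [hc, smul_sub]
      rw [Finset.sum_sub_distrib, hfg', sub_self]
    have h1 : ∑ S : Finset (Fin n), sgn K S • (∑ L : Finset (Fin n), sgn L S • c L)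
        = 0 := by
      simp [hS]
    have h2 : ∑ S : Finset (Fin n), sgn K S • (∑ L : Finset (Fin n), sgn L S • c L)
        = ∑ L : Finset (Fin n), (∑ S : Finset (Fin n), sgn K S * sgn L S) • c L := by
      simp_rw [Finset.smul_sum, smul_smul]
      rw [Finset.sum_comm]
      simp_rw [← Finset.sum_smul]
    rw [h2] at h1
    simp_rw [sgn_orth] at h1
    simp_rw [ite_smul, zero_smul] at h1
    rw [Finset.sum_ite_eq] at h1
    simp only [Finset.mem_univ, if_pos] at h1
    have h2n : ((2:ℝ)^n) ≠ 0 := by positivity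
    have hcK : c K = 0 := (smul_eq_zero.mp h1).resolve_left h2n
    have hJK : JK I K ≠ 0 := by
      unfold JK
      refine List.prod_ne_zero fun h0 => ?_
      rw [List.mem_map] at h0
      obtain ⟨h, -, hh⟩ := h0
      have hs := hI h
      rw [Sph, Set.mem_setOf_eq, hh] at hs
      have : (0:ℍ) = -1 := by simpa using hs
      exact one_ne_zero (neg_eq_zero.mp this.symm)
    have hsub : JK I K * F K z = JK I K * G K z := sub_eq_zero.mp hcK
    exact mul_left_cancel₀ hJK hsub
  intro x hx
  obtain ⟨α, β, J, hJ, rfl, hz⟩ := hx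
  rw [hFind α β J hJ hz, hGind α β J hJ hz]
  exact Finset.sum_congr rfl fun K _ => by rw [key α β hz K]
end
end

section
/- Let (f_l)_{l∈ℕ} be a sequence of slice functions Ω_D → ℍ converging pointwise on Ω_D to a function f : Ω_D → ℍ. Then f is a slice function. -/
noncomputable section

variable {n : ℕ}

namespace SliceAux
open Finset

def qi : ℍ := ⟨0,1,0,0⟩

lemma qi_sph : qi ∈ Sph := by
  show qi ^ 2 = -1
  ext <;> simp only [pow_two, Quaternion.re_mul, Quaternion.imI_mul, Quaternion.imJ_mul, Quaternion.imK_mul] <;> simp [qi, Quaternion.re_one, Quaternion.imI_one, Quaternion.imJ_one, Quaternion.imK_one]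

lemma qi_ne_zero : qi ≠ 0 := by
  intro h
  have := congrArg QuaternionAlgebra.imI h
  simp [qi, Quaternion.imI_zero] at this

lemma neg_one_pow_symmDiff (A B : Finset (Fin n)) :
    (-1:ℝ) ^ (symmDiff A B).card = (-1) ^ A.card * (-1) ^ B.card := by
  have hc : (symmDiff A B).card = (A \ B).card + (B \ A).card := by
    rw [symmDiff_def]
    exact Finset.card_union_of_disjoint disjoint_sdiff_sdiff
  have hA : (A ∩ B).card + (A \ B).card = A.card := Finset.card_inter_add_card_sdiff A B
  have hB : (B ∩ A).card + (B \ A).card = B.card := Finset.card_inter_add_card_sdiff B A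
  have hBA : (B ∩ A).card = (A ∩ B).card := by rw [Finset.inter_comm]
  have key : A.card + B.card = (symmDiff A B).card + 2 * (A ∩ B).card := by omega
  rw [← pow_add, key, pow_add, pow_mul]
  norm_num

lemma neg_one_pow_symmDiff_singleton (A : Finset (Fin n)) (s : Fin n) :
    (-1:ℝ) ^ (symmDiff A {s}).card = -(-1) ^ A.card := by
  rw [neg_one_pow_symmDiff]
  simp

lemma sum_sign_ne (S : Finset (Fin n)) (hS : S.Nonempty) :
    ∑ H : Finset (Fin n), (-1:ℝ) ^ (S ∩ H).card = 0 := by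
  obtain ⟨s, hs⟩ := hS
  have einv : Function.Involutive (fun H : Finset (Fin n) => symmDiff H {s}) :=
    fun H => symmDiff_symmDiff_cancel_right {s} H
  have key : ∀ H : Finset (Fin n),
      (-1:ℝ) ^ (S ∩ symmDiff H {s}).card = -(-1:ℝ) ^ (S ∩ H).card := by
    intro H
    have h1 : S ∩ symmDiff H {s} = symmDiff (S ∩ H) {s} := by
      rw [show S ∩ symmDiff H {s} = S ⊓ symmDiff H {s} from rfl,
        inf_symmDiff_distrib_left]
      congr 1
      · simpa using Finset.inter_singleton_of_mem hs
    rw [h1, neg_one_pow_symmDiff_singleton]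
  have h2 : (∑ H : Finset (Fin n), (-1:ℝ) ^ (S ∩ symmDiff H {s}).card)
      = ∑ H : Finset (Fin n), (-1:ℝ) ^ (S ∩ H).card :=
    Fintype.sum_equiv einv.toPerm _ _ (fun H => rfl)
  have h3 : (∑ H : Finset (Fin n), (-1:ℝ) ^ (S ∩ symmDiff H {s}).card)
      = -∑ H : Finset (Fin n), (-1:ℝ) ^ (S ∩ H).card := by
    simp_rw [key]; rw [Finset.sum_neg_distrib]
  have := h2.symm.trans h3
  linarith

lemma orth (K K' : Finset (Fin n)) :
    ∑ H : Finset (Fin n), (-1:ℝ) ^ (K ∩ H).card * (-1:ℝ) ^ (K' ∩ H).card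
      = if K' = K then (2:ℝ) ^ n else 0 := by
  have hterm : ∀ H : Finset (Fin n), (-1:ℝ) ^ (K ∩ H).card * (-1:ℝ) ^ (K' ∩ H).card
      = (-1:ℝ) ^ ((symmDiff K K') ∩ H).card := by
    intro H
    rw [show symmDiff K K' ∩ H = symmDiff K K' ⊓ H from rfl, inf_symmDiff_distrib_right,
      neg_one_pow_symmDiff]
    rfl
  simp_rw [hterm]
  by_cases h : K' = K
  · subst h
    simp only [symmDiff_self, bot_inf_eq, if_pos rfl]
    simp [Finset.card_univ, Fintype.card_finset]
  · rw [if_neg h]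
    apply sum_sign_ne
    rw [Finset.nonempty_iff_ne_empty]
    intro hb
    exact h (symmDiff_eq_bot.mp hb).symm

lemma JK_qi (K : Finset (Fin n)) : JK (fun _ => qi) K = qi ^ K.card := by
  unfold JK
  rw [List.map_const']
  simp

/-- Conjugation of the coordinates in `H`. -/
def conjSet (H : Finset (Fin n)) (z : Fin n → ℂ) : Fin n → ℂ :=
  fun h => if h ∈ H then (starRingEnd ℂ) (z h) else z h

lemma conjSet_empty (z : Fin n → ℂ) : conjSet ∅ z = z := by
  funext h; simp [conjSet]

lemma conjSet_insert (a : Fin n) (H : Finset (Fin n)) (ha : a ∉ H) (z : Fin n → ℂ) :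
    conjSet (insert a H) z = conjCoord a (conjSet H z) := by
  funext h
  by_cases hh : h = a
  · subst hh
    simp [conjSet, conjCoord, Function.update, ha]
  · simp [conjSet, conjCoord, Function.update, hh, Finset.mem_insert]

lemma conjSet_mem {D : Set (Fin n → ℂ)} (hinv : ConjInv D) (H : Finset (Fin n)) :
    ∀ z ∈ D, conjSet H z ∈ D := by
  induction H using Finset.induction_on with
  | empty => intro z hz; rw [conjSet_empty]; exact hz
  | insert _ _ ha ih =>
      intro z hz
      rw [conjSet_insert _ _ ha]
      exact hinv _ _ (ih z hz)

lemma stem_conjSet {D : Set (Fin n → ℂ)} (hinv : ConjInv D)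
    {F : Finset (Fin n) → (Fin n → ℂ) → ℍ} (hF : IsStem D F)
    (K H : Finset (Fin n)) {z : Fin n → ℂ} (hz : z ∈ D) :
    F K (conjSet H z) = ((-1:ℝ) ^ (K ∩ H).card) • F K z := by
  induction H using Finset.induction_on with
  | empty => simp [conjSet_empty]
  | @insert a H ha ih =>
      rw [conjSet_insert _ _ ha, hF K a _ (conjSet_mem hinv H z hz), ih]
      by_cases haK : a ∈ K
      · rw [if_pos haK, Finset.inter_insert_of_mem haK,
          Finset.card_insert_of_notMem (fun hm => ha (Finset.mem_of_mem_inter_right hm)),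
          pow_succ]
        rw [mul_smul_comm]
        simp [smul_smul, mul_comm]
      · rw [if_neg haK, Finset.inter_insert_of_notMem haK, one_mul]

/-- Flip the imaginary parts with index in `H`. -/
def flipIm (H : Finset (Fin n)) (β : Fin n → ℝ) : Fin n → ℝ :=
  fun h => if h ∈ H then -β h else β h

lemma zOf_flip (α β : Fin n → ℝ) (H : Finset (Fin n)) :
    zOf α (flipIm H β) = conjSet H (zOf α β) := by
  funext h
  by_cases hh : h ∈ H <;>
    simp [zOf, flipIm, conjSet, hh, Complex.ext_iff]

@[simp] lemma zOf_re (α β : Fin n → ℝ) (h : Fin n) : (zOf α β h).re = α h := by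
  simp [zOf]

@[simp] lemma zOf_im (α β : Fin n → ℝ) (h : Fin n) : (zOf α β h).im = β h := by
  simp [zOf]

lemma zOf_re_im (z : Fin n → ℂ) :
    zOf (fun h => (z h).re) (fun h => (z h).im) = z := by
  funext h
  simp [zOf, Complex.re_add_im]

/-- The inversion operator recovering a stem function from the slice function. -/
def Phi (g : (Fin n → ℍ) → ℍ) (K : Finset (Fin n)) (z : Fin n → ℂ) : ℍ :=
  ((2:ℝ) ^ n)⁻¹ • ((qi ^ K.card)⁻¹ * ∑ H : Finset (Fin n),
    ((-1:ℝ) ^ (K ∩ H).card) •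
      g (ptOf (fun h => (z h).re) (flipIm H (fun h => (z h).im)) (fun _ => qi)))

lemma pt_mem_omega {D : Set (Fin n → ℂ)} (hinv : ConjInv D)
    (α β : Fin n → ℝ) (hz : zOf α β ∈ D) (H : Finset (Fin n)) :
    ptOf α (flipIm H β) (fun _ => qi) ∈ OmegaD D := by
  refine ⟨α, flipIm H β, fun _ => qi, fun _ => qi_sph, rfl, ?_⟩
  rw [zOf_flip]
  exact conjSet_mem hinv H _ hz

lemma inversion {D : Set (Fin n → ℂ)} (hinv : ConjInv D)
    {G : Finset (Fin n) → (Fin n → ℂ) → ℍ} {g : (Fin n → ℍ) → ℍ}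
    (hG : IsStem D G) (hGg : Induces D G g) {z : Fin n → ℂ} (hz : z ∈ D)
    (K : Finset (Fin n)) : Phi g K z = G K z := by
  set α : Fin n → ℝ := fun h => (z h).re with hα
  set β : Fin n → ℝ := fun h => (z h).im with hβ
  have hzz : zOf α β = z := zOf_re_im z
  have hzD : zOf α β ∈ D := by rw [hzz]; exact hz
  have hval : ∀ H : Finset (Fin n),
      g (ptOf α (flipIm H β) (fun _ => qi))
        = ∑ K' : Finset (Fin n),
            ((-1:ℝ) ^ (K' ∩ H).card) • (qi ^ K'.card * G K' z) := by
    intro H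
    have hmem : zOf α (flipIm H β) ∈ D := by
      rw [zOf_flip]; exact conjSet_mem hinv H _ hzD
    rw [hGg α (flipIm H β) _ (fun _ => qi_sph) hmem]
    refine Finset.sum_congr rfl (fun K' _ => ?_)
    rw [JK_qi, zOf_flip, hzz, stem_conjSet hinv hG K' H hz, mul_smul_comm]
  have hsum : (∑ H : Finset (Fin n), ((-1:ℝ) ^ (K ∩ H).card) •
      g (ptOf α (flipIm H β) (fun _ => qi)))
      = ((2:ℝ) ^ n) • (qi ^ K.card * G K z) := by
    calc (∑ H : Finset (Fin n), ((-1:ℝ) ^ (K ∩ H).card) •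
        g (ptOf α (flipIm H β) (fun _ => qi)))
        = ∑ H : Finset (Fin n), ∑ K' : Finset (Fin n),
            ((-1:ℝ) ^ (K ∩ H).card * (-1:ℝ) ^ (K' ∩ H).card) •
              (qi ^ K'.card * G K' z) := by
          refine Finset.sum_congr rfl (fun H _ => ?_)
          rw [hval H, Finset.smul_sum]
          exact Finset.sum_congr rfl (fun K' _ => smul_smul _ _ _)
      _ = ∑ K' : Finset (Fin n), (∑ H : Finset (Fin n),
            (-1:ℝ) ^ (K ∩ H).card * (-1:ℝ) ^ (K' ∩ H).card) •
              (qi ^ K'.card * G K' z) := by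
          rw [Finset.sum_comm]
          exact Finset.sum_congr rfl (fun K' _ => (Finset.sum_smul).symm)
      _ = ∑ K' : Finset (Fin n), (if K' = K then (2:ℝ) ^ n else 0) •
              (qi ^ K'.card * G K' z) := by
          exact Finset.sum_congr rfl (fun K' _ => by rw [orth])
      _ = ((2:ℝ) ^ n) • (qi ^ K.card * G K z) := by
          simp only [ite_smul, zero_smul]
          rw [Finset.sum_ite_eq' Finset.univ K]
          simp
  show ((2:ℝ) ^ n)⁻¹ • ((qi ^ K.card)⁻¹ * _) = G K z
  rw [show (ptOf (fun h => (z h).re)) = ptOf α from rfl]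
  rw [hsum, mul_smul_comm, smul_smul, inv_mul_cancel₀ (by positivity : (2:ℝ)^n ≠ 0),
    one_smul, inv_mul_cancel_left₀ (pow_ne_zero _ qi_ne_zero)]

end SliceAux

/-- **Pointwise limits of slice functions are slice.** -/
theorem stmt4 (n : ℕ) (hn : 0 < n) (D : Set (Fin n → ℂ)) (hne : D.Nonempty)
    (hinv : ConjInv D) (fl : ℕ → (Fin n → ℍ) → ℍ) (f : (Fin n → ℍ) → ℍ)
    (hsl : ∀ l, IsSlice D (fl l))
    (hconv : ∀ x ∈ OmegaD D,
      Filter.Tendsto (fun l => fl l x) Filter.atTop (nhds (f x))) :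
    IsSlice D f := by
  classical
  choose G hGstem hGind using hsl
  have key : ∀ z ∈ D, ∀ K : Finset (Fin n),
      Filter.Tendsto (fun l => G l K z) Filter.atTop (nhds (SliceAux.Phi f K z)) := by
    intro z hz K
    have heq : ∀ l, G l K z = SliceAux.Phi (fl l) K z := fun l =>
      (SliceAux.inversion hinv (hGstem l) (hGind l) hz K).symm
    simp only [heq]
    unfold SliceAux.Phi
    refine Filter.Tendsto.const_smul ?_ _
    refine Filter.Tendsto.const_mul _ ?_
    refine tendsto_finset_sum _ (fun H _ => ?_)
    refine Filter.Tendsto.const_smul ?_ _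
    exact hconv _ (SliceAux.pt_mem_omega hinv _ _
      (by rw [SliceAux.zOf_re_im]; exact hz) H)
  refine ⟨SliceAux.Phi f, ?_, ?_⟩
  · intro K h z hz
    have t1 := key _ (hinv h z hz) K
    have t2 : Filter.Tendsto (fun l => G l K (conjCoord h z)) Filter.atTop
        (nhds ((if h ∈ K then -1 else 1) * SliceAux.Phi f K z)) := by
      have heq : ∀ l, G l K (conjCoord h z) = (if h ∈ K then -1 else 1) * G l K z :=
        fun l => hGstem l K h z hz
      simp only [heq]
      exact (key z hz K).const_mul _
    exact tendsto_nhds_unique t1 t2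
  · intro α β J hJ hz
    have hpt : ptOf α β J ∈ OmegaD D := ⟨α, β, J, hJ, rfl, hz⟩
    have t1 := hconv _ hpt
    have t2 : Filter.Tendsto (fun l => fl l (ptOf α β J)) Filter.atTop
        (nhds (∑ K : Finset (Fin n), JK J K * SliceAux.Phi f K (zOf α β))) := by
      have heq : ∀ l, fl l (ptOf α β J)
          = ∑ K : Finset (Fin n), JK J K * G l K (zOf α β) :=
        fun l => hGind l α β J hJ hz
      simp only [heq]
      exact tendsto_finset_sum _ (fun K _ => (key _ hz K).const_mul _)
    exact tendsto_nhds_unique t1 t2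
end
end

section
/- For every n ≥ 2, the function f : ℍⁿ → ℍ defined by f(x₁,…,xₙ) := x₂x₁ (the quaternionic product of the second coordinate by the first, in this order) is not a slice function on ℍⁿ = Ω_{ℂⁿ}. -/
noncomputable section

variable {n : ℕ}

def iq : ℍ := ⟨0,1,0,0⟩
def jq : ℍ := ⟨0,0,1,0⟩

lemma iq_re : iq.re = 0 := rfl
lemma iq_imI : iq.imI = 1 := rfl
lemma iq_imJ : iq.imJ = 0 := rfl
lemma iq_imK : iq.imK = 0 := rfl
lemma jq_re : jq.re = 0 := rfl
lemma jq_imI : jq.imI = 0 := rfl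
lemma jq_imJ : jq.imJ = 1 := rfl
lemma jq_imK : jq.imK = 0 := rfl

set_option maxHeartbeats 1000000 in
lemma quatFive (d a b c : ℍ)
    (e1 : iq * iq = d + iq * a + iq * b + iq * iq * c)
    (e2 : jq * iq = d + iq * a + jq * b + iq * jq * c)
    (e3 : jq * -iq = d + -iq * a + jq * b + -iq * jq * c)
    (e4 : -jq * iq = d + iq * a + -jq * b + iq * -jq * c)
    (e5 : -jq * -iq = d + -iq * a + -jq * b + -iq * -jq * c) : False := by
  rw [Quaternion.ext_iff] at e1 e2 e3 e4 e5
  obtain ⟨e1a, e1b, e1c, e1d⟩ := e1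
  obtain ⟨e2a, e2b, e2c, e2d⟩ := e2
  obtain ⟨e3a, e3b, e3c, e3d⟩ := e3
  obtain ⟨e4a, e4b, e4c, e4d⟩ := e4
  obtain ⟨e5a, e5b, e5c, e5d⟩ := e5
  simp only [iq_re, iq_imI, iq_imJ, iq_imK, jq_re, jq_imI, jq_imJ, jq_imK, Quaternion.re_mul, Quaternion.imI_mul, Quaternion.imJ_mul, Quaternion.imK_mul, Quaternion.re_add, Quaternion.imI_add, Quaternion.imJ_add, Quaternion.imK_add, Quaternion.re_neg, Quaternion.imI_neg, Quaternion.imJ_neg, Quaternion.imK_neg] at e1a e1b e1c e1d e2a e2b e2c e2d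
  simp only [iq_re, iq_imI, iq_imJ, iq_imK, jq_re, jq_imI, jq_imJ, jq_imK, Quaternion.re_mul, Quaternion.imI_mul, Quaternion.imJ_mul, Quaternion.imK_mul, Quaternion.re_add, Quaternion.imI_add, Quaternion.imJ_add, Quaternion.imK_add, Quaternion.re_neg, Quaternion.imI_neg, Quaternion.imJ_neg, Quaternion.imK_neg] at e3a e3b e3c e3d e4a e4b e4c e4d e5a e5b e5c e5d
  norm_num at e1a e1b e1c e1d e2a e2b e2c e2d
  norm_num at e3a e3b e3c e3d e4a e4b e4c e4d e5a e5b e5c e5d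
  linarith [e1a, e1b, e1c, e1d, e2a, e2b, e2c, e2d, e3a, e3b, e3c, e3d, e4a, e4b, e4c, e4d, e5a, e5b, e5c, e5d]

/-- For `n ≥ 2`, the pointwise product `x₂ x₁` is not a slice
function on `ℍⁿ = Ω_{ℂⁿ}`. -/
theorem stmt5 (n : ℕ) (hn : 2 ≤ n) :
    ¬ IsSlice (Set.univ : Set (Fin n → ℂ))
      (fun x : Fin n → ℍ => x ⟨1, by omega⟩ * x ⟨0, by omega⟩) := by
  rintro ⟨F, hstem, hind⟩
  have i0 : Fin n := ⟨0, by omega⟩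
  -- we use explicit `⟨0, _⟩`, `⟨1, _⟩` throughout
  clear i0
  set β : Fin n → ℝ := fun h => if h = ⟨0, by omega⟩ ∨ h = ⟨1, by omega⟩ then 1 else 0
    with hβ
  -- coordinates outside {0,1} of the base point are zero
  have hz0 : ∀ h : Fin n, h ≠ ⟨0, by omega⟩ → h ≠ ⟨1, by omega⟩ → zOf 0 β h = 0 := by
    intro h h0 h1
    simp [zOf, hβ, h0, h1]
  -- the stem vanishes at z on sets K not contained in {0,1}
  have hFzero : ∀ K : Finset (Fin n),
      ¬ K ⊆ {⟨0, by omega⟩, ⟨1, by omega⟩} → F K (zOf 0 β) = 0 := by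
    intro K hK
    obtain ⟨h, hhK, hh⟩ := Finset.not_subset.mp hK
    simp only [Finset.mem_insert, Finset.mem_singleton, not_or] at hh
    have hzh : zOf 0 β h = 0 := hz0 h hh.1 hh.2
    have hconj : conjCoord h (zOf 0 β) = zOf 0 β := by
      funext m
      by_cases hm : m = h
      · subst hm; simp [conjCoord, hzh]
      · simp [conjCoord, Function.update_of_ne hm]
    have hst := hstem K h (zOf 0 β) (Set.mem_univ _)
    rw [hconj, if_pos hhK, neg_one_mul] at hst
    have h2 : F K (zOf 0 β) + F K (zOf 0 β) = 0 := by
      nth_rewrite 1 [hst]; exact neg_add_cancel _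
    have h3 : (2:ℝ) • F K (zOf 0 β) = 0 := by rw [two_smul]; exact h2
    simpa using smul_eq_zero.mp h3
  -- the key identity, for arbitrary imaginary units A B
  have key : ∀ A B : ℍ, A ∈ Sph → B ∈ Sph →
      B * A = F ∅ (zOf 0 β) + A * F {⟨0, by omega⟩} (zOf 0 β)
        + B * F {⟨1, by omega⟩} (zOf 0 β)
        + A * B * F {⟨0, by omega⟩, ⟨1, by omega⟩} (zOf 0 β) := by
    intro A B hA hB
    set J : Fin n → ℍ := fun h =>
      if h = ⟨0, by omega⟩ then A else if h = ⟨1, by omega⟩ then B else ⟨0,1,0,0⟩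
      with hJ
    have hJSph : ∀ h, J h ∈ Sph := by
      intro h
      rw [hJ]
      dsimp only
      split
      · exact hA
      show (if h = ⟨1, by omega⟩ then B else iq) ∈ Sph
      split
      · exact hB
      · show iq ^ 2 = -1
        ext <;> norm_num [sq, iq_re, iq_imI, iq_imJ, iq_imK, Quaternion.re_mul, Quaternion.imI_mul, Quaternion.imJ_mul, Quaternion.imK_mul, Quaternion.re_one, Quaternion.imI_one, Quaternion.imJ_one, Quaternion.imK_one]
    have heq := hind 0 β J hJSph (Set.mem_univ _)
    have hpt : ∀ h : Fin n, (h = ⟨0, by omega⟩ ∨ h = ⟨1, by omega⟩) →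
        ptOf 0 β J h = J h := by
      intro h hh
      have : β h = 1 := by simp [hβ, hh]
      simp [ptOf, this]
    have hL : (fun x : Fin n → ℍ => x ⟨1, by omega⟩ * x ⟨0, by omega⟩) (ptOf 0 β J)
        = B * A := by
      simp only
      rw [hpt ⟨0, by omega⟩ (Or.inl rfl), hpt ⟨1, by omega⟩ (Or.inr rfl), hJ]
      have h10 : (⟨1, by omega⟩ : Fin n) ≠ ⟨0, by omega⟩ := by simp [Fin.ext_iff]
      simp [h10]
    rw [hL] at heq
    rw [heq]
    -- reduce the sum to subsets of {0,1}
    have h01 : (⟨0, by omega⟩ : Fin n) ≠ ⟨1, by omega⟩ := by simp [Fin.ext_iff]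
    have hsum : (∑ K : Finset (Fin n), JK J K * F K (zOf 0 β))
        = ∑ K ∈ ({⟨0, by omega⟩, ⟨1, by omega⟩} : Finset (Fin n)).powerset,
            JK J K * F K (zOf 0 β) := by
      symm
      apply Finset.sum_subset (Finset.subset_univ _)
      intro K _ hK
      rw [hFzero K (by simpa [Finset.mem_powerset] using hK), mul_zero]
    rw [hsum]
    have hpow : ({⟨0, by omega⟩, ⟨1, by omega⟩} : Finset (Fin n)).powerset
        = {∅, {⟨0, by omega⟩}, {⟨1, by omega⟩}, {⟨0, by omega⟩, ⟨1, by omega⟩}} := by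
      ext K
      simp only [Finset.mem_powerset, Finset.mem_insert, Finset.mem_singleton]
      constructor
      · intro hK
        by_cases h0 : (⟨0, by omega⟩ : Fin n) ∈ K <;>
          by_cases h1 : (⟨1, by omega⟩ : Fin n) ∈ K
        · right; right; right
          apply Finset.Subset.antisymm hK
          intro x hx
          simp only [Finset.mem_insert, Finset.mem_singleton] at hx
          rcases hx with rfl | rfl <;> assumption
        · right; left
          apply Finset.Subset.antisymm
          · intro x hx
            have hx2 := hK hx
            simp only [Finset.mem_insert, Finset.mem_singleton] at hx2
            simp only [Finset.mem_singleton]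
            rcases hx2 with rfl | rfl
            · rfl
            · exact absurd hx h1
          · simpa using h0
        · right; right; left
          apply Finset.Subset.antisymm
          · intro x hx
            have hx2 := hK hx
            simp only [Finset.mem_insert, Finset.mem_singleton] at hx2
            simp only [Finset.mem_singleton]
            rcases hx2 with rfl | rfl
            · exact absurd hx h0
            · rfl
          · simpa using h1
        · left
          rw [Finset.eq_empty_iff_forall_notMem]
          intro x hx
          have hx2 := hK hx
          simp only [Finset.mem_insert, Finset.mem_singleton] at hx2
          rcases hx2 with rfl | rfl
          · exact h0 hx
          · exact h1 hx
      · rintro (rfl | rfl | rfl | rfl)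
        · exact Finset.empty_subset _
        · intro x hx
          simp only [Finset.mem_singleton] at hx
          simp [hx]
        · intro x hx
          simp only [Finset.mem_singleton] at hx
          simp [hx]
        · exact Finset.Subset.refl _
    rw [hpow]
    have hne1 : (∅ : Finset (Fin n)) ∉
        ({{⟨0, by omega⟩}, {⟨1, by omega⟩}, {⟨0, by omega⟩, ⟨1, by omega⟩}} :
          Finset (Finset (Fin n))) := by
      simp only [Finset.mem_insert, Finset.mem_singleton, not_or]
      exact ⟨fun h => Finset.singleton_ne_empty _ h.symm,
        fun h => Finset.singleton_ne_empty _ h.symm,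
        fun h => Finset.insert_ne_empty _ _ h.symm⟩
    have hne2 : ({⟨0, by omega⟩} : Finset (Fin n)) ∉
        ({{⟨1, by omega⟩}, {⟨0, by omega⟩, ⟨1, by omega⟩}} : Finset (Finset (Fin n))) := by
      simp only [Finset.mem_insert, Finset.mem_singleton, not_or]
      constructor
      · rw [Finset.singleton_inj]; exact h01
      · intro hcon
        have : (⟨1, by omega⟩ : Fin n) ∈ ({⟨0, by omega⟩} : Finset (Fin n)) := by
          rw [hcon]; simp
        simp only [Finset.mem_singleton] at this
        exact h01 this.symm
    have hne3 : ({⟨1, by omega⟩} : Finset (Fin n)) ∉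
        ({{⟨0, by omega⟩, ⟨1, by omega⟩}} : Finset (Finset (Fin n))) := by
      simp only [Finset.mem_singleton]
      intro hcon
      have : (⟨0, by omega⟩ : Fin n) ∈ ({⟨1, by omega⟩} : Finset (Fin n)) := by
        rw [hcon]; simp
      simp only [Finset.mem_singleton] at this
      exact h01 this
    rw [Finset.sum_insert hne1, Finset.sum_insert hne2, Finset.sum_insert hne3,
      Finset.sum_singleton]
    have hJK0 : JK J (∅ : Finset (Fin n)) = 1 := by simp [JK, Finset.sort_empty]
    have hJK1 : JK J {⟨0, by omega⟩} = A := by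
      simp [JK, Finset.sort_singleton, hJ]
    have hJK2 : JK J {⟨1, by omega⟩} = B := by
      have h10 : (⟨1, by omega⟩ : Fin n) ≠ ⟨0, by omega⟩ := fun h => h01 h.symm
      simp [JK, Finset.sort_singleton, hJ, h10]
    have hJK3 : JK J {⟨0, by omega⟩, ⟨1, by omega⟩} = A * B := by
      rw [JK, Finset.sort_insert]
      · have h10 : (⟨1, by omega⟩ : Fin n) ≠ ⟨0, by omega⟩ := fun h => h01 h.symm
        simp [Finset.sort_singleton, hJ, h10]
      · intro b hb
        simp only [Finset.mem_singleton] at hb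
        subst hb; exact Fin.mk_le_mk.mpr (by omega)
      · simpa using h01
    rw [hJK0, hJK1, hJK2, hJK3, one_mul]
    abel
  -- now instantiate at five pairs of imaginary units and derive a contradiction
  have hi : iq ∈ Sph := by show _ ^ 2 = -1; ext <;> norm_num [sq, iq_re, iq_imI, iq_imJ, iq_imK, Quaternion.re_mul, Quaternion.imI_mul, Quaternion.imJ_mul, Quaternion.imK_mul, Quaternion.re_one, Quaternion.imI_one, Quaternion.imJ_one, Quaternion.imK_one]
  have hni : -iq ∈ Sph := by show _ ^ 2 = -1; ext <;> norm_num [sq, iq_re, iq_imI, iq_imJ, iq_imK, Quaternion.re_mul, Quaternion.imI_mul, Quaternion.imJ_mul, Quaternion.imK_mul, Quaternion.re_one, Quaternion.imI_one, Quaternion.imJ_one, Quaternion.imK_one]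
  have hj : jq ∈ Sph := by show _ ^ 2 = -1; ext <;> norm_num [sq, jq_re, jq_imI, jq_imJ, jq_imK, Quaternion.re_mul, Quaternion.imI_mul, Quaternion.imJ_mul, Quaternion.imK_mul, Quaternion.re_one, Quaternion.imI_one, Quaternion.imJ_one, Quaternion.imK_one]
  have hnj : -jq ∈ Sph := by show _ ^ 2 = -1; ext <;> norm_num [sq, jq_re, jq_imI, jq_imJ, jq_imK, Quaternion.re_mul, Quaternion.imI_mul, Quaternion.imJ_mul, Quaternion.imK_mul, Quaternion.re_one, Quaternion.imI_one, Quaternion.imJ_one, Quaternion.imK_one]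
  exact quatFive _ _ _ _ (key iq iq hi hi) (key iq jq hi hj)
    (key (-iq) jq hni hj) (key iq (-jq) hi hnj) (key (-iq) (-jq) hni hnj)
end
end

section
/- For each k ∈ ℕ let p_k, q_k : ℝ² → ℝ be defined by (α+iβ)^k = p_k(α,β) + i q_k(α,β). Let ℓ = (ℓ₁,…,ℓₙ) ∈ ℕⁿ and a ∈ ℍ, and define F^{(ℓ)} = (F^{(ℓ)}_K)_{K∈𝒫(n)} by F^{(ℓ)}_K(z) := (∏_{h∈{1,…,n}∖K} p_{ℓ_h}(α_h,β_h)) (∏_{h∈K} q_{ℓ_h}(α_h,β_h)) a for z = (α₁+iβ₁,…,αₙ+iβₙ) ∈ D. Then F^{(ℓ)} is a stem function on D and the slice function it induces is the monomial function x ↦ x^ℓ a on Ω_D. Consequently every polynomial function on Ω_D is a slice function. -/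
noncomputable section

variable {n : ℕ}

section Stmt6Aux

open Finset

lemma coe_smul_one' (r : ℝ) : (r:ℍ) = r • (1:ℍ) := by
  rw [show (1:ℍ) = ((1:ℝ):ℍ) by norm_num, Quaternion.smul_coe, mul_one]

lemma mul_slice' (J : ℍ) (hJ : J*J = -1) (p q a b : ℝ) :
    ((p:ℍ) + (q:ℍ)*J) * ((a:ℍ) + (b:ℍ)*J)
      = ((p*a - q*b : ℝ):ℍ) + ((p*b + q*a : ℝ):ℍ)*J := by
  simp only [coe_smul_one', smul_mul_assoc, mul_smul_comm, one_mul, mul_one, add_mul, mul_add, hJ,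
    smul_smul]
  module

section PQ

variable (p q : ℕ → ℝ → ℝ → ℝ)
variable (hpq : ∀ (k : ℕ) (a b : ℝ),
      ((a : ℂ) + (b : ℂ) * Complex.I) ^ k = (p k a b : ℂ) + (q k a b : ℂ) * Complex.I)
include hpq

lemma pq_zero' (a b : ℝ) : p 0 a b = 1 ∧ q 0 a b = 0 := by
  have h := hpq 0 a b
  rw [pow_zero] at h
  simpa [Complex.ext_iff, eq_comm] using h

lemma pq_rec' (k : ℕ) (a b : ℝ) :
    p (k+1) a b = p k a b * a - q k a b * b ∧ q (k+1) a b = p k a b * b + q k a b * a := by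
  have h1 := hpq k a b
  have h2 := hpq (k+1) a b
  rw [pow_succ, h1] at h2
  simp [Complex.ext_iff] at h2
  constructor <;> linarith [h2.1, h2.2]

lemma pq_parity' (k : ℕ) (a b : ℝ) : p k a (-b) = p k a b ∧ q k a (-b) = -q k a b := by
  have h1 := hpq k a b
  have h2 := hpq k a (-b)
  have hc : ((a : ℂ) + ((-b : ℝ) : ℂ) * Complex.I)
      = (starRingEnd ℂ) ((a:ℂ) + (b:ℂ)*Complex.I) := by
    simp [Complex.ext_iff]
  rw [hc, ← map_pow, h1] at h2
  simp [Complex.ext_iff] at h2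
  exact ⟨h2.1.symm, by linarith [h2.2]⟩

lemma pow_slice' (J : ℍ) (hJ : J ∈ Sph) (k : ℕ) (a b : ℝ) :
    ((a:ℍ) + (b:ℍ) * J) ^ k = ((p k a b : ℝ):ℍ) + ((q k a b : ℝ):ℍ) * J := by
  have hJJ : J * J = -1 := by rw [← sq]; exact hJ
  induction k with
  | zero =>
    obtain ⟨h1, h2⟩ := pq_zero' p q hpq a b
    simp [h1, h2]
  | succ k ih =>
    obtain ⟨h1, h2⟩ := pq_rec' p q hpq k a b
    rw [pow_succ, ih, mul_slice' J hJJ, h1, h2]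

end PQ

lemma JK_empty' {n : ℕ} (J : Fin n → ℍ) : JK J ∅ = 1 := by simp [JK]

lemma sort_map_succ' {n : ℕ} (K : Finset (Fin n)) :
    (K.map (Fin.succEmb n)).sort (· ≤ ·) = (K.sort (· ≤ ·)).map Fin.succ := by
  refine List.Perm.eq_of_pairwise' (r := ((· ≤ ·) : Fin (n+1) → Fin (n+1) → Prop)) ?_ ?_ ?_
  rotate_right
  · refine ((K.map (Fin.succEmb n)).sort_perm_toList _).trans ?_
    have h1 : ((K.map (Fin.succEmb n)).toList : Multiset (Fin (n+1)))
        = ((K.sort (· ≤ ·)).map Fin.succ : List (Fin (n+1))) := by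
      rw [Finset.toList]
      rw [Multiset.coe_toList]
      rw [Finset.map_val]
      rw [← Multiset.map_coe]
      congr 1
      exact (K.sort_eq (· ≤ ·)).symm
    exact Quotient.exact h1
  · exact Finset.pairwise_sort _ _
  · exact List.Pairwise.map _ (fun a b hab => Fin.succ_le_succ_iff.mpr hab)
      (Finset.pairwise_sort K _)

lemma JK_map_succ' {n : ℕ} (J : Fin (n+1) → ℍ) (K : Finset (Fin n)) :
    JK J (K.map (Fin.succEmb n)) = JK (J ∘ Fin.succ) K := by
  rw [JK, sort_map_succ', List.map_map, JK]

lemma JK_insert_zero' {n : ℕ} (J : Fin (n+1) → ℍ) (S : Finset (Fin (n+1)))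
    (h0 : (0:Fin (n+1)) ∉ S) :
    JK J (insert 0 S) = J 0 * JK J S := by
  rw [JK, Finset.sort_insert (· ≤ ·) (fun b _ => Fin.zero_le b) h0, List.map_cons,
    List.prod_cons, JK]

lemma zero_not_mem_map' {n : ℕ} (K : Finset (Fin n)) :
    (0:Fin (n+1)) ∉ K.map (Fin.succEmb n) := by
  simp [Finset.mem_map, Fin.coe_succEmb]

lemma map_succ_compl' {n : ℕ} (K : Finset (Fin n)) :
    (K.map (Fin.succEmb n))ᶜ = insert 0 (Kᶜ.map (Fin.succEmb n)) := by
  ext x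
  cases x using Fin.cases with
  | zero => simp [zero_not_mem_map', Fin.succ_ne_zero, Fin.coe_succEmb]
  | succ y => simp [Fin.coe_succEmb, Fin.succ_ne_zero, Fin.succ_inj]

lemma insert_map_compl' {n : ℕ} (K : Finset (Fin n)) :
    (insert (0:Fin (n+1)) (K.map (Fin.succEmb n)))ᶜ = Kᶜ.map (Fin.succEmb n) := by
  ext x
  cases x using Fin.cases with
  | zero => simp [zero_not_mem_map', Fin.coe_succEmb, Fin.succ_ne_zero]
  | succ y => simp [Fin.coe_succEmb, Fin.succ_ne_zero, Fin.succ_inj]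

lemma sum_split' {n : ℕ} {M : Type*} [AddCommMonoid M] (f : Finset (Fin (n+1)) → M) :
    ∑ K : Finset (Fin (n+1)), f K =
      (∑ K : Finset (Fin n), f (K.map (Fin.succEmb n))) +
      ∑ K : Finset (Fin n), f (insert 0 (K.map (Fin.succEmb n))) := by
  classical
  rw [← Finset.sum_filter_add_sum_filter_not Finset.univ
    (fun K => (0:Fin (n+1)) ∉ K) f]
  congr 1
  · refine (Finset.sum_nbij' (i := fun K => K.map (Fin.succEmb n))
      (j := fun K => K.preimage Fin.succ (Fin.succ_injective n).injOn)
      ?_ ?_ ?_ ?_ ?_).symm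
    · intro K _; simp [zero_not_mem_map', Fin.succ_ne_zero]
    · intro K _; simp
    · intro K _; exact Finset.preimage_map _ _
    · intro K hK
      simp only [Finset.mem_filter] at hK
      ext x
      cases x using Fin.cases with
      | zero => simp [zero_not_mem_map', hK.2, Fin.succ_ne_zero]
      | succ y => simp [Fin.coe_succEmb, Fin.succ_inj, Finset.mem_preimage]
    · intro K _; rfl
  · refine (Finset.sum_nbij' (i := fun K => insert 0 (K.map (Fin.succEmb n)))
      (j := fun K => (K.erase 0).preimage Fin.succ (Fin.succ_injective n).injOn)
      ?_ ?_ ?_ ?_ ?_).symm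
    · intro K _; simp
    · intro K _; simp
    · intro K _
      rw [Finset.erase_insert (zero_not_mem_map' K)]; exact Finset.preimage_map _ _
    · intro K hK
      simp only [Finset.mem_filter, not_not] at hK
      ext x
      cases x using Fin.cases with
      | zero => simp [hK.2]
      | succ y =>
        simp [Fin.coe_succEmb, Fin.succ_ne_zero, Fin.succ_inj, Finset.mem_preimage,
          Finset.mem_erase]
    · intro K _; rfl

lemma prod_expand' : ∀ (n : ℕ) (r s : Fin n → ℝ) (J : Fin n → ℍ),
    (List.ofFn (fun h => (r h : ℍ) + (s h : ℍ) * J h)).prod =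
      ∑ K : Finset (Fin n), JK J K * ((((∏ h ∈ Kᶜ, r h) * ∏ h ∈ K, s h : ℝ)) : ℍ) := by
  intro n
  induction n with
  | zero =>
    intro r s J
    rw [show (Finset.univ : Finset (Finset (Fin 0))) = {∅} by decide]
    simp [JK_empty']
  | succ n ih =>
    intro r s J
    rw [List.ofFn_succ, List.prod_cons]
    rw [show (List.ofFn fun i : Fin n => (r i.succ : ℍ) + (s i.succ : ℍ) * J i.succ) =
      (List.ofFn fun i : Fin n => ((r ∘ Fin.succ) i : ℍ) + ((s ∘ Fin.succ) i : ℍ)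
        * (J ∘ Fin.succ) i) from rfl]
    rw [ih (r ∘ Fin.succ) (s ∘ Fin.succ) (J ∘ Fin.succ)]
    rw [sum_split' (n := n)]
    rw [add_mul, Finset.mul_sum, Finset.mul_sum]
    congr 1
    · refine Finset.sum_congr rfl fun K _ => ?_
      rw [JK_map_succ', map_succ_compl', Finset.prod_insert (zero_not_mem_map' Kᶜ),
        Finset.prod_map, Finset.prod_map]
      simp only [Fin.coe_succEmb, Function.comp]
      simp only [coe_smul_one', smul_mul_assoc, mul_smul_comm, smul_smul, one_mul, mul_one]
      module
    · refine Finset.sum_congr rfl fun K _ => ?_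
      rw [JK_insert_zero' _ _ (zero_not_mem_map' K), JK_map_succ', insert_map_compl',
        Finset.prod_insert (zero_not_mem_map' K), Finset.prod_map, Finset.prod_map]
      simp only [Fin.coe_succEmb, Function.comp]
      simp only [coe_smul_one', smul_mul_assoc, mul_smul_comm, smul_smul, one_mul, mul_one]
      module

section MonoAux

variable {n : ℕ} (p q : ℕ → ℝ → ℝ → ℝ)
variable (hpq : ∀ (k : ℕ) (a b : ℝ),
      ((a : ℂ) + (b : ℂ) * Complex.I) ^ k = (p k a b : ℂ) + (q k a b : ℂ) * Complex.I)
include hpq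

lemma isStem_mono' (D : Set (Fin n → ℂ)) (ℓ : Fin n → ℕ) (a : ℍ) :
    IsStem D (fun K z =>
        ((((∏ h ∈ Kᶜ, p (ℓ h) (z h).re (z h).im) *
            ∏ h ∈ K, q (ℓ h) (z h).re (z h).im : ℝ)) : ℍ) * a) := by
  intro K h z _
  have hre : ∀ h', ((conjCoord h z) h').re = (z h').re := by
    intro h'
    by_cases hh : h' = h
    · subst hh; simp [conjCoord]
    · simp [conjCoord, Function.update_apply, hh]
  have him : ∀ h', ((conjCoord h z) h').im
      = (if h' = h then -(z h').im else (z h').im) := by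
    intro h'
    by_cases hh : h' = h
    · subst hh; simp [conjCoord]
    · simp [conjCoord, Function.update_apply, hh]
  by_cases hK : h ∈ K
  · have hp : ∏ h' ∈ Kᶜ, p (ℓ h') ((conjCoord h z) h').re ((conjCoord h z) h').im
        = ∏ h' ∈ Kᶜ, p (ℓ h') (z h').re (z h').im := by
      refine Finset.prod_congr rfl fun h' hh' => ?_
      have hne : h' ≠ h := by
        intro e; subst e; exact (Finset.mem_compl.mp hh') hK
      rw [hre, him, if_neg hne]
    have hq : ∏ h' ∈ K, q (ℓ h') ((conjCoord h z) h').re ((conjCoord h z) h').im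
        = ∏ h' ∈ K, ((if h' = h then (-1:ℝ) else 1) * q (ℓ h') (z h').re (z h').im) := by
      refine Finset.prod_congr rfl fun h' _ => ?_
      rw [hre, him]
      by_cases hh : h' = h
      · rw [if_pos hh, if_pos hh, (pq_parity' p q hpq (ℓ h') (z h').re (z h').im).2]; ring
      · rw [if_neg hh, if_neg hh, one_mul]
    dsimp only
    rw [hp, hq, Finset.prod_mul_distrib, Finset.prod_ite_eq' K h (fun _ => (-1:ℝ)),
      if_pos hK, if_pos hK]
    push_cast
    simp [mul_neg, neg_mul, mul_assoc]
  · have hp : ∏ h' ∈ Kᶜ, p (ℓ h') ((conjCoord h z) h').re ((conjCoord h z) h').im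
        = ∏ h' ∈ Kᶜ, p (ℓ h') (z h').re (z h').im := by
      refine Finset.prod_congr rfl fun h' _ => ?_
      rw [hre, him]
      by_cases hh : h' = h
      · rw [if_pos hh, (pq_parity' p q hpq (ℓ h') (z h').re (z h').im).1]
      · rw [if_neg hh]
    have hq : ∏ h' ∈ K, q (ℓ h') ((conjCoord h z) h').re ((conjCoord h z) h').im
        = ∏ h' ∈ K, q (ℓ h') (z h').re (z h').im := by
      refine Finset.prod_congr rfl fun h' hh' => ?_
      have hne : h' ≠ h := by
        intro e; subst e; exact hK hh'
      rw [hre, him, if_neg hne]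
    dsimp only
    rw [hp, hq, if_neg hK, one_mul]

lemma induces_mono' (D : Set (Fin n → ℂ)) (ℓ : Fin n → ℕ) (a : ℍ) :
    Induces D (fun K z =>
        ((((∏ h ∈ Kᶜ, p (ℓ h) (z h).re (z h).im) *
            ∏ h ∈ K, q (ℓ h) (z h).re (z h).im : ℝ)) : ℍ) * a)
      (mono ℓ a) := by
  intro α β J hJ _
  have hre : ∀ h, (zOf α β h).re = α h := fun h => by simp [zOf]
  have him : ∀ h, (zOf α β h).im = β h := fun h => by simp [zOf]
  have hof : (List.ofFn fun h => (ptOf α β J) h ^ ℓ h)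
      = List.ofFn fun h => (((fun h => p (ℓ h) (α h) (β h)) h : ℝ) : ℍ)
          + (((fun h => q (ℓ h) (α h) (β h)) h : ℝ) : ℍ) * J h := by
    refine congrArg _ (funext fun h => ?_)
    exact pow_slice' p q hpq (J h) (hJ h) (ℓ h) (α h) (β h)
  rw [mono, hof, prod_expand', Finset.sum_mul]
  refine Finset.sum_congr rfl fun K _ => ?_
  simp only [hre, him, mul_assoc]

end MonoAux

end Stmt6Aux

/-- The canonical stem function of a monomial, and sliceness of
polynomial functions. -/
theorem stmt6 (n : ℕ) (hn : 0 < n) (D : Set (Fin n → ℂ)) (hne : D.Nonempty)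
    (hinv : ConjInv D)
    (p q : ℕ → ℝ → ℝ → ℝ)
    (hpq : ∀ (k : ℕ) (a b : ℝ),
      ((a : ℂ) + (b : ℂ) * Complex.I) ^ k = (p k a b : ℂ) + (q k a b : ℂ) * Complex.I)
    (ℓ : Fin n → ℕ) (a : ℍ) :
    (IsStem D (fun K z =>
        ((((∏ h ∈ Kᶜ, p (ℓ h) (z h).re (z h).im) *
            ∏ h ∈ K, q (ℓ h) (z h).re (z h).im : ℝ)) : ℍ) * a) ∧
      Induces D (fun K z =>
        ((((∏ h ∈ Kᶜ, p (ℓ h) (z h).re (z h).im) *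
            ∏ h ∈ K, q (ℓ h) (z h).re (z h).im : ℝ)) : ℍ) * a)
        (mono ℓ a)) ∧
    ∀ (L : Finset (Fin n → ℕ)) (c : (Fin n → ℕ) → ℍ),
      IsSlice D (fun x => ∑ m ∈ L, mono m (c m) x) := by
  constructor
  · exact ⟨isStem_mono' p q hpq D ℓ a, induces_mono' p q hpq D ℓ a⟩
  · intro L c
    refine ⟨fun K z => ∑ m ∈ L,
      ((((∏ h ∈ Kᶜ, p (m h) (z h).re (z h).im) *
          ∏ h ∈ K, q (m h) (z h).re (z h).im : ℝ)) : ℍ) * c m, ?_, ?_⟩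
    · intro K h z hz
      rw [Finset.mul_sum]
      exact Finset.sum_congr rfl fun m _ => isStem_mono' p q hpq D m (c m) K h z hz
    · intro α β J hJ hz
      calc ∑ m ∈ L, mono m (c m) (ptOf α β J)
          = ∑ m ∈ L, ∑ K : Finset (Fin n), JK J K *
              (((((∏ h ∈ Kᶜ, p (m h) (zOf α β h).re (zOf α β h).im) *
                ∏ h ∈ K, q (m h) (zOf α β h).re (zOf α β h).im : ℝ)) : ℍ) * c m) :=
            Finset.sum_congr rfl fun m _ => induces_mono' p q hpq D m (c m) α β J hJ hz
        _ = ∑ K : Finset (Fin n), ∑ m ∈ L, JK J K *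
              (((((∏ h ∈ Kᶜ, p (m h) (zOf α β h).re (zOf α β h).im) *
                ∏ h ∈ K, q (m h) (zOf α β h).re (zOf α β h).im : ℝ)) : ℍ) * c m) :=
            Finset.sum_comm
        _ = _ := by
            refine Finset.sum_congr rfl fun K _ => ?_
            rw [Finset.mul_sum]

end
end

section
/- Let F = (F_K)_{K∈𝒫(n)} be a stem function on D such that every component F_K : D → ℍ is continuous (D carrying the topology induced from ℂⁿ). Then the induced slice function f = ℐ(F) : Ω_D → ℍ is continuous (Ω_D carrying the topology induced from ℍⁿ). -/
noncomputable section

variable {n : ℕ}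

namespace SphAux

lemma re_eq_zero {J : ℍ} (hJ : J ∈ Sph) : J.re = 0 := by
  have h : J * J = -1 := by rw [← sq]; exact hJ
  have h1 := congrArg QuaternionAlgebra.re h
  have h2 := congrArg QuaternionAlgebra.imI h
  have h3 := congrArg QuaternionAlgebra.imJ h
  have h4 := congrArg QuaternionAlgebra.imK h
  simp [Quaternion.re_mul, Quaternion.imI_mul, Quaternion.imJ_mul,
    Quaternion.imK_mul, Quaternion.re_one, Quaternion.imI_one, Quaternion.imJ_one,
    Quaternion.imK_one] at h1 h2 h3 h4
  have key : J.re * (J.re ^ 2 + 1) = 0 := by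
    linear_combination J.re * h1 + (J.imI / 2) * h2 + (J.imJ / 2) * h3 + (J.imK / 2) * h4
  rcases mul_eq_zero.mp key with h0 | h0
  · exact h0
  · nlinarith [sq_nonneg J.re]

lemma norm_eq_one {J : ℍ} (hJ : J ∈ Sph) : ‖J‖ = 1 := by
  have h : ‖J‖ ^ 2 = 1 := by
    rw [← norm_pow, hJ]; simp
  nlinarith [norm_nonneg J]

lemma isCompact_sph : IsCompact (Sph : Set ℍ) := by
  have hcl : IsClosed (Sph : Set ℍ) := isClosed_eq (continuous_pow 2) continuous_const
  have hbd : Bornology.IsBounded (Sph : Set ℍ) := by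
    refine (Metric.isBounded_closedBall (x := (0:ℍ)) (r := 1)).subset ?_
    intro J hJ
    simp [Metric.mem_closedBall, dist_zero_right, norm_eq_one hJ]
  exact Metric.isCompact_of_isClosed_isBounded hcl hbd

lemma abs_re_le_norm (q : ℍ) : |q.re| ≤ ‖q‖ := by
  have h := Quaternion.normSq_eq_norm_mul_self q
  rw [Quaternion.normSq_def'] at h
  nlinarith [norm_nonneg q, sq_abs q.re, abs_nonneg q.re,
    sq_nonneg q.imI, sq_nonneg q.imJ, sq_nonneg q.imK]

end SphAux

open SphAux

section MoreAux
variable {n : ℕ}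

lemma ptOf_re {α β : Fin n → ℝ} {J : Fin n → ℍ} (hJ : ∀ h, J h ∈ Sph) (h : Fin n) :
    (ptOf α β J h).re = α h := by
  simp [ptOf, Quaternion.re_mul, re_eq_zero (hJ h)]

lemma ptOf_norm_sub {α β : Fin n → ℝ} {J : Fin n → ℍ} (hJ : ∀ h, J h ∈ Sph) (h : Fin n) :
    ‖ptOf α β J h - ((α h : ℝ) : ℍ)‖ = |β h| := by
  have e : ptOf α β J h - ((α h : ℝ) : ℍ) = ((β h : ℝ) : ℍ) * J h := by
    simp [ptOf]
  rw [e, norm_mul, Quaternion.norm_coe, norm_eq_one (hJ h), mul_one, Real.norm_eq_abs]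

lemma mem_of_flip {D : Set (Fin n → ℂ)} (hinv : ConjInv D) (s : Finset (Fin n)) :
    ∀ z ∈ D, (fun h => if h ∈ s then (starRingEnd ℂ) (z h) else z h) ∈ D := by
  classical
  induction s using Finset.induction_on with
  | empty => intro z hz; simpa using hz
  | @insert a s ha ih =>
    intro z hz
    have hg := ih z hz
    have hc := hinv a _ hg
    convert hc using 1
    funext h
    simp only [conjCoord, Function.update_apply]
    by_cases hha : h = a
    · subst hha
      simp [ha]
    · by_cases hhs : h ∈ s <;> simp [Finset.mem_insert, hha, hhs]

lemma continuous_JK (K : Finset (Fin n)) : Continuous fun J : Fin n → ℍ => JK J K := by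
  unfold JK
  generalize (K.sort (· ≤ ·)) = l
  induction l with
  | nil => simpa using continuous_const
  | cons a t ih =>
    simp only [List.map_cons, List.prod_cons]
    exact (continuous_apply a).mul ih

end MoreAux

/-- A slice function induced by a continuous stem function is
continuous. -/
theorem stmt7 (n : ℕ) (hn : 0 < n) (D : Set (Fin n → ℂ)) (hne : D.Nonempty)
    (hinv : ConjInv D) (F : Finset (Fin n) → (Fin n → ℂ) → ℍ)
    (hF : IsStem D F) (hcont : ∀ K, ContinuousOn (F K) D)
    (f : (Fin n → ℍ) → ℍ) (hf : Induces D F f) :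
    ContinuousOn f (OmegaD D) := by
  classical
  intro x₀ hx₀
  obtain ⟨α₀, β₀, J₀, hJ₀, hx₀eq, hz₀⟩ := hx₀
  have hre₀ : ∀ h, (x₀ h).re = α₀ h := fun h => by rw [hx₀eq]; exact ptOf_re hJ₀ h
  show Filter.Tendsto f (nhdsWithin x₀ (OmegaD D)) (nhds (f x₀))
  rw [Filter.tendsto_iff_seq_tendsto]
  intro u hu
  have humem : ∀ᶠ m in Filter.atTop, u m ∈ OmegaD D := hu self_mem_nhdsWithin
  have hux : Filter.Tendsto u Filter.atTop (nhds x₀) := hu.mono_right nhdsWithin_le_nhds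
  have hrep : ∀ m, ∃ p : (Fin n → ℝ) × (Fin n → ℝ) × (Fin n → ℍ),
      (∀ h, p.2.2 h ∈ Sph) ∧ zOf p.1 p.2.1 ∈ D ∧
      (u m ∈ OmegaD D → u m = ptOf p.1 p.2.1 p.2.2) ∧
      (u m ∉ OmegaD D → p.2.1 = β₀) := by
    intro m
    by_cases hm : u m ∈ OmegaD D
    · obtain ⟨α, β, J, hJ, heq, hz⟩ := hm
      exact ⟨(α, β, J), hJ, hz, fun _ => heq, fun hn => absurd ⟨α, β, J, hJ, heq, hz⟩ hn⟩
    · exact ⟨(α₀, β₀, J₀), hJ₀, hz₀, fun h => absurd h hm, fun _ => rfl⟩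
  choose rep hJrep hzrep hptrep hbad using hrep
  set A : ℕ → Fin n → ℝ := fun m => (rep m).1 with hA_def
  set B : ℕ → Fin n → ℝ := fun m => (rep m).2.1 with hB_def
  set Jm : ℕ → Fin n → ℍ := fun m => (rep m).2.2 with hJm_def
  have hAre : ∀ m, u m ∈ OmegaD D → ∀ h, A m h = (u m h).re := by
    intro m hm h
    rw [hptrep m hm]
    exact (ptOf_re (hJrep m) h).symm
  have hBabs : ∀ m, u m ∈ OmegaD D → ∀ h,
      |B m h| = ‖u m h - (((u m h).re : ℝ) : ℍ)‖ := by
    intro m hm h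
    conv_rhs => rw [← hAre m hm h, hptrep m hm]
    exact (ptOf_norm_sub (hJrep m) h).symm
  obtain ⟨R₀, hR₀⟩ := (hux.norm).bddAbove_range
  have hR₀' : ∀ m, ‖u m‖ ≤ R₀ := fun m => hR₀ ⟨m, rfl⟩
  set R : ℝ := 2 * R₀ + ‖β₀‖ with hR_def
  have hBnd : ∀ m h, |B m h| ≤ R := by
    intro m h
    by_cases hm : u m ∈ OmegaD D
    · have e := hBabs m hm h
      have h1 : ‖u m h - (((u m h).re : ℝ) : ℍ)‖ ≤ ‖u m h‖ + ‖(((u m h).re : ℝ) : ℍ)‖ :=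
        norm_sub_le _ _
      have h2 : ‖(((u m h).re : ℝ) : ℍ)‖ ≤ ‖u m h‖ := by
        rw [Quaternion.norm_coe, Real.norm_eq_abs]; exact abs_re_le_norm _
      have h3 : ‖u m h‖ ≤ ‖u m‖ := norm_le_pi_norm (u m) h
      have h4 : (0:ℝ) ≤ ‖β₀‖ := norm_nonneg _
      rw [e]; have := hR₀' m; rw [hR_def]; linarith
    · have e : B m = β₀ := hbad m hm
      rw [e]
      have h1 : |β₀ h| ≤ ‖β₀‖ := by
        rw [← Real.norm_eq_abs]; exact norm_le_pi_norm β₀ h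
      have h2 : (0:ℝ) ≤ R₀ := le_trans (norm_nonneg _) (hR₀' 0)
      rw [hR_def]; linarith
  refine Filter.tendsto_of_subseq_tendsto fun ns hns => ?_
  set C : Set ((Fin n → ℝ) × (Fin n → ℍ)) :=
    (Set.univ.pi fun _ => Metric.closedBall (0:ℝ) R) ×ˢ (Set.univ.pi fun _ => Sph) with hC_def
  have hC : IsCompact C :=
    (isCompact_univ_pi fun _ => isCompact_closedBall 0 R).prod
      (isCompact_univ_pi fun _ => isCompact_sph)
  have hmemC : ∀ m, (B (ns m), Jm (ns m)) ∈ C := by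
    intro m
    refine ⟨fun h _ => ?_, fun h _ => hJrep _ h⟩
    simpa [Metric.mem_closedBall, Real.dist_eq] using hBnd (ns m) h
  obtain ⟨p, hpC, ms, hms, hlim⟩ := hC.tendsto_subseq hmemC
  obtain ⟨βs, Js⟩ := p
  refine ⟨ms, ?_⟩
  set φ : ℕ → ℕ := fun m => ns (ms m) with hφ_def
  have hφ : Filter.Tendsto φ Filter.atTop Filter.atTop := hns.comp hms.tendsto_atTop
  have hgood : ∀ᶠ m in Filter.atTop, u (φ m) ∈ OmegaD D := hφ.eventually humem
  have huφ : Filter.Tendsto (fun m => u (φ m)) Filter.atTop (nhds x₀) := hux.comp hφ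
  have hBφ : Filter.Tendsto (fun m => B (φ m)) Filter.atTop (nhds βs) :=
    (continuous_fst.tendsto _).comp hlim
  have hJφ : Filter.Tendsto (fun m => Jm (φ m)) Filter.atTop (nhds Js) :=
    (continuous_snd.tendsto _).comp hlim
  have hJsSph : ∀ h, Js h ∈ Sph := fun h => hpC.2 h (Set.mem_univ h)
  have huh : ∀ h : Fin n, Filter.Tendsto (fun m => u (φ m) h) Filter.atTop (nhds (x₀ h)) :=
    fun h => ((continuous_apply h).tendsto x₀).comp huφ
  have hAφ : Filter.Tendsto (fun m => A (φ m)) Filter.atTop (nhds α₀) := by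
    rw [tendsto_pi_nhds]
    intro h
    have h1 : Filter.Tendsto (fun m => (u (φ m) h).re) Filter.atTop (nhds (α₀ h)) := by
      have := (Quaternion.continuous_re.tendsto (x₀ h)).comp (huh h)
      rwa [hre₀ h] at this
    refine h1.congr' ?_
    filter_upwards [hgood] with m hm
    exact (hAre (φ m) hm h).symm
  have hβabs : ∀ h, |βs h| = |β₀ h| := by
    intro h
    have l1 : Filter.Tendsto (fun m => |B (φ m) h|) Filter.atTop (nhds |βs h|) :=
      (continuous_abs.tendsto _).comp (((continuous_apply h).tendsto βs).comp hBφ)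
    have l2 : Filter.Tendsto (fun m => |B (φ m) h|) Filter.atTop (nhds |β₀ h|) := by
      have hcontq : Continuous fun q : ℍ => ‖q - ((q.re : ℝ) : ℍ)‖ :=
        (continuous_id.sub (Quaternion.continuous_coe.comp Quaternion.continuous_re)).norm
      have t1 : Filter.Tendsto (fun m => ‖u (φ m) h - (((u (φ m) h).re : ℝ) : ℍ)‖)
          Filter.atTop (nhds ‖x₀ h - (((x₀ h).re : ℝ) : ℍ)‖) := (hcontq.tendsto _).comp (huh h)
      have e2 : ‖x₀ h - (((x₀ h).re : ℝ) : ℍ)‖ = |β₀ h| := by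
        rw [hre₀ h, hx₀eq]
        exact ptOf_norm_sub hJ₀ h
      rw [e2] at t1
      refine t1.congr' ?_
      filter_upwards [hgood] with m hm
      exact (hBabs (φ m) hm h).symm
    exact tendsto_nhds_unique l1 l2
  have hpt : ptOf α₀ βs Js = x₀ := by
    have t1 : Filter.Tendsto (fun m => ptOf (A (φ m)) (B (φ m)) (Jm (φ m)))
        Filter.atTop (nhds (ptOf α₀ βs Js)) := by
      rw [tendsto_pi_nhds]
      intro h
      have ta : Filter.Tendsto (fun m => A (φ m) h) Filter.atTop (nhds (α₀ h)) :=
        ((continuous_apply h).tendsto α₀).comp hAφ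
      have tb : Filter.Tendsto (fun m => B (φ m) h) Filter.atTop (nhds (βs h)) :=
        ((continuous_apply h).tendsto βs).comp hBφ
      have tj : Filter.Tendsto (fun m => Jm (φ m) h) Filter.atTop (nhds (Js h)) :=
        ((continuous_apply h).tendsto Js).comp hJφ
      exact ((Quaternion.continuous_coe.tendsto _).comp ta).add
        (((Quaternion.continuous_coe.tendsto _).comp tb).mul tj)
    have t2 : Filter.Tendsto (fun m => ptOf (A (φ m)) (B (φ m)) (Jm (φ m)))
        Filter.atTop (nhds x₀) := by
      refine huφ.congr' ?_
      filter_upwards [hgood] with m hm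
      exact hptrep (φ m) hm
    exact tendsto_nhds_unique t1 t2
  have hzs : zOf α₀ βs ∈ D := by
    have hmem := mem_of_flip hinv (Finset.univ.filter fun h => βs h ≠ β₀ h) (zOf α₀ β₀) hz₀
    convert hmem using 1
    funext h
    by_cases hb : βs h = β₀ h
    · rw [if_neg (by simp [hb])]
      simp [zOf, hb]
    · rw [if_pos (by simp [hb])]
      have hneg : βs h = -β₀ h := by
        rcases abs_eq_abs.mp (hβabs h) with h' | h'
        · exact absurd h' hb
        · exact h'
      simp only [zOf, map_add, map_mul, Complex.conj_ofReal, Complex.conj_I, hneg]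
      push_cast
      ring
  have hzlim : Filter.Tendsto (fun m => zOf (A (φ m)) (B (φ m))) Filter.atTop
      (nhdsWithin (zOf α₀ βs) D) := by
    rw [tendsto_nhdsWithin_iff]
    constructor
    · rw [tendsto_pi_nhds]
      intro h
      have ta : Filter.Tendsto (fun m => A (φ m) h) Filter.atTop (nhds (α₀ h)) :=
        ((continuous_apply h).tendsto α₀).comp hAφ
      have tb : Filter.Tendsto (fun m => B (φ m) h) Filter.atTop (nhds (βs h)) :=
        ((continuous_apply h).tendsto βs).comp hBφ
      exact ((Complex.continuous_ofReal.tendsto _).comp ta).add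
        (((Complex.continuous_ofReal.tendsto _).comp tb).mul tendsto_const_nhds)
    · exact Filter.Eventually.of_forall fun m => hzrep (φ m)
  have hmain : Filter.Tendsto
      (fun m => ∑ K : Finset (Fin n), JK (Jm (φ m)) K * F K (zOf (A (φ m)) (B (φ m))))
      Filter.atTop (nhds (∑ K : Finset (Fin n), JK Js K * F K (zOf α₀ βs))) := by
    refine tendsto_finset_sum _ fun K _ => Filter.Tendsto.mul ?_ ?_
    · exact ((continuous_JK K).tendsto Js).comp hJφ
    · exact Filter.Tendsto.comp (hcont K _ hzs) hzlim
  have hfx : f x₀ = ∑ K : Finset (Fin n), JK Js K * F K (zOf α₀ βs) := by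
    rw [← hpt]
    exact hf α₀ βs Js hJsSph hzs
  rw [hfx]
  refine hmain.congr' ?_
  filter_upwards [hgood] with m hm
  show _ = f (u (φ m))
  rw [hptrep (φ m) hm]
  exact (hf _ _ _ (hJrep _) (hzrep _)).symm
end
end

section
/- Leibniz's rule: let D be open and let f, g : Ω_D → ℍ be slice functions induced by C¹ stem functions. Then for every h ∈ {1,…,n}: ∂(f⊙g)/∂x_h = (∂f/∂x_h)⊙g + f⊙(∂g/∂x_h) and ∂(f⊙g)/∂x_h^c = (∂f/∂x_h^c)⊙g + f⊙(∂g/∂x_h^c) on Ω_D. -/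
noncomputable section

variable {n : ℕ}

/-! ### Auxiliary lemmas for Statement 13 -/

section Aux13
open Finset

lemma symmDiff_singleton_of_mem' {A : Finset (Fin n)} {h : Fin n} (hA : h ∈ A) :
    symmDiff A {h} = A.erase h := by
  ext a; by_cases ha : a = h <;> simp [Finset.mem_symmDiff, ha, hA]

lemma symmDiff_singleton_of_not_mem' {A : Finset (Fin n)} {h : Fin n} (hA : h ∉ A) :
    symmDiff A {h} = insert h A := by
  ext a; by_cases ha : a = h <;> simp [Finset.mem_symmDiff, ha, hA]

lemma neg_one_pow_symmDiff (A : Finset (Fin n)) (h : Fin n) :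
    (-1 : ℝ) ^ (symmDiff A {h}).card = -(-1 : ℝ) ^ A.card := by
  by_cases hA : h ∈ A
  · rw [symmDiff_singleton_of_mem' hA, ← Finset.card_erase_add_one hA, pow_succ]; ring
  · rw [symmDiff_singleton_of_not_mem' hA, Finset.card_insert_of_notMem hA, pow_succ]; ring

lemma sigmaT_singleton_of_mem {A : Finset (Fin n)} {h : Fin n} (hA : h ∈ A) :
    sigmaT A {h} = -1 := by
  simp [sigmaT, Finset.inter_singleton_of_mem hA]

lemma sigmaT_singleton_of_not_mem {A : Finset (Fin n)} {h : Fin n} (hA : h ∉ A) :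
    sigmaT A {h} = 1 := by
  simp [sigmaT, Finset.inter_singleton_of_notMem hA]

lemma inter_symmDiff_singleton_of_mem {H L : Finset (Fin n)} {h : Fin n} (hL : h ∈ L) :
    (symmDiff H {h}) ∩ L = symmDiff (H ∩ L) {h} := by
  ext a; by_cases ha : a = h <;> simp [Finset.mem_symmDiff, ha, hL] <;> tauto

lemma inter_symmDiff_singleton_of_not_mem {H L : Finset (Fin n)} {h : Fin n} (hL : h ∉ L) :
    (symmDiff H {h}) ∩ L = H ∩ L := by
  ext a; by_cases ha : a = h <;> simp [Finset.mem_symmDiff, ha, hL] <;> tauto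

lemma signI (H L : Finset (Fin n)) (h : Fin n) :
    sigmaT (symmDiff H L) {h} * sigmaT (symmDiff H {h}) L = sigmaT H {h} * sigmaT H L := by
  by_cases hL : h ∈ L
  · have e2 : sigmaT (symmDiff H {h}) L = -sigmaT H L := by
      unfold sigmaT; rw [inter_symmDiff_singleton_of_mem hL, neg_one_pow_symmDiff]
    by_cases hH : h ∈ H
    · have hK : h ∉ symmDiff H L := by simp [Finset.mem_symmDiff, hH, hL]
      rw [e2, sigmaT_singleton_of_not_mem hK, sigmaT_singleton_of_mem hH]; ring
    · have hK : h ∈ symmDiff H L := by simp [Finset.mem_symmDiff, hH, hL]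
      rw [e2, sigmaT_singleton_of_mem hK, sigmaT_singleton_of_not_mem hH]; ring
  · have e2 : sigmaT (symmDiff H {h}) L = sigmaT H L := by
      unfold sigmaT; rw [inter_symmDiff_singleton_of_not_mem hL]
    by_cases hH : h ∈ H
    · have hK : h ∈ symmDiff H L := by simp [Finset.mem_symmDiff, hH, hL]
      rw [e2, sigmaT_singleton_of_mem hK, sigmaT_singleton_of_mem hH]
    · have hK : h ∉ symmDiff H L := by simp [Finset.mem_symmDiff, hH, hL]
      rw [e2, sigmaT_singleton_of_not_mem hK, sigmaT_singleton_of_not_mem hH]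

lemma sigmaT_comm (H L : Finset (Fin n)) : sigmaT H L = sigmaT L H := by
  unfold sigmaT; rw [Finset.inter_comm]

lemma signII (H L : Finset (Fin n)) (h : Fin n) :
    sigmaT (symmDiff H L) {h} * sigmaT H (symmDiff L {h}) = sigmaT L {h} * sigmaT H L := by
  have := signI L H h
  rw [symmDiff_comm L H] at this
  rw [sigmaT_comm H (symmDiff L {h}), sigmaT_comm H L]
  exact this

variable {D : Set (Fin n → ℂ)}

lemma diffAt {φ : (Fin n → ℂ) → ℍ} (hD : IsOpen D) (h1 : ContDiffOn ℝ 1 φ D)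
    {z : Fin n → ℂ} (hz : z ∈ D) : DifferentiableAt ℝ φ z :=
  (h1.differentiableOn one_ne_zero).differentiableAt (hD.mem_nhds hz)

lemma SP_hasFDerivAt (σ : Finset (Fin n) → Finset (Fin n) → ℝ)
    {F G : Finset (Fin n) → (Fin n → ℂ) → ℍ}
    (hD : IsOpen D) (hF1 : StemC1 D F) (hG1 : StemC1 D G)
    {z : Fin n → ℂ} (hz : z ∈ D) (K : Finset (Fin n)) :
    HasFDerivAt (SP σ F G K)
      (∑ H : Finset (Fin n), ∑ L : Finset (Fin n),
        if symmDiff H L = K then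
          σ H L • (F H z • fderiv ℝ (G L) z + (fderiv ℝ (F H) z).smulRight (G L z))
        else 0) z := by
  apply HasFDerivAt.fun_sum
  intro H _
  apply HasFDerivAt.fun_sum
  intro L _
  by_cases hc : symmDiff H L = K
  · simp only [hc, if_true]
    exact (((diffAt hD (hF1 H) hz).hasFDerivAt.mul'
      (diffAt hD (hG1 L) hz).hasFDerivAt)).const_smul (σ H L)
  · simp only [hc, if_false]
    exact hasFDerivAt_const 0 z

lemma SP_fderiv_apply (σ : Finset (Fin n) → Finset (Fin n) → ℝ)
    {F G : Finset (Fin n) → (Fin n → ℂ) → ℍ}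
    (hD : IsOpen D) (hF1 : StemC1 D F) (hG1 : StemC1 D G)
    {z : Fin n → ℂ} (hz : z ∈ D) (K : Finset (Fin n)) (v : Fin n → ℂ) :
    fderiv ℝ (SP σ F G K) z v = ∑ H : Finset (Fin n), ∑ L : Finset (Fin n),
      if symmDiff H L = K then
        σ H L • (F H z * fderiv ℝ (G L) z v + fderiv ℝ (F H) z v * G L z)
      else 0 := by
  rw [(SP_hasFDerivAt σ hD hF1 hG1 hz K).fderiv]
  simp only [ContinuousLinearMap.coe_sum', Finset.sum_apply]
  refine Finset.sum_congr rfl fun H _ => Finset.sum_congr rfl fun L _ => ?_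
  split_ifs
  · simp [ContinuousLinearMap.smulRight_apply, smul_eq_mul, smul_smul,
      ContinuousLinearMap.add_apply, mul_smul_comm]
  · rfl

lemma cond_iffF {H L K : Finset (Fin n)} {h : Fin n} :
    (symmDiff (symmDiff H {h}) L = symmDiff K {h}) ↔ symmDiff H L = K := by
  rw [symmDiff_assoc, symmDiff_comm ({h} : Finset (Fin n)) L, ← symmDiff_assoc]
  constructor
  · intro e
    have := congrArg (fun A => symmDiff A ({h} : Finset (Fin n))) e
    simpa [symmDiff_symmDiff_cancel_right] using this
  · intro e; rw [e]

lemma cond_iffG {H L K : Finset (Fin n)} {h : Fin n} :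
    (symmDiff H (symmDiff L {h}) = symmDiff K {h}) ↔ symmDiff H L = K := by
  rw [← symmDiff_assoc]
  constructor
  · intro e
    have := congrArg (fun A => symmDiff A ({h} : Finset (Fin n))) e
    simpa [symmDiff_symmDiff_cancel_right] using this
  · intro e; rw [e]

lemma reindexF (c : ℝ) (h : Fin n) (K : Finset (Fin n))
    (φ : Finset (Fin n) → Finset (Fin n) → ℍ) :
    (c * sigmaT K {h}) • ∑ H : Finset (Fin n), ∑ L : Finset (Fin n),
        (if symmDiff H L = symmDiff K {h} then sigmaT H L • φ H L else 0)
    = ∑ H : Finset (Fin n), ∑ L : Finset (Fin n),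
        if symmDiff H L = K then (sigmaT H L * (c * sigmaT H {h})) • φ (symmDiff H {h}) L
        else 0 := by
  rw [Finset.smul_sum]
  simp only [Finset.smul_sum, smul_ite, smul_zero, smul_smul]
  have inv : Function.Involutive (fun A : Finset (Fin n) => symmDiff A {h}) :=
    fun A => symmDiff_symmDiff_cancel_right {h} A
  refine (Fintype.sum_equiv inv.toPerm _ _ fun H => ?_).symm
  simp only [Function.Involutive.coe_toPerm]
  refine Finset.sum_congr rfl fun L _ => ?_
  by_cases hc : symmDiff H L = K
  · simp only [if_pos hc, cond_iffF, hc, if_true]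
    congr 1
    have hs := signI H L h
    rw [hc] at hs
    linear_combination -c * hs
  · simp only [if_neg hc, cond_iffF, hc, if_false]

lemma reindexG (c : ℝ) (h : Fin n) (K : Finset (Fin n))
    (φ : Finset (Fin n) → Finset (Fin n) → ℍ) :
    (c * sigmaT K {h}) • ∑ H : Finset (Fin n), ∑ L : Finset (Fin n),
        (if symmDiff H L = symmDiff K {h} then sigmaT H L • φ H L else 0)
    = ∑ H : Finset (Fin n), ∑ L : Finset (Fin n),
        if symmDiff H L = K then (sigmaT H L * (c * sigmaT L {h})) • φ H (symmDiff L {h})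
        else 0 := by
  rw [Finset.smul_sum]
  simp only [Finset.smul_sum, smul_ite, smul_zero, smul_smul]
  refine Finset.sum_congr rfl fun H _ => ?_
  have inv : Function.Involutive (fun A : Finset (Fin n) => symmDiff A {h}) :=
    fun A => symmDiff_symmDiff_cancel_right {h} A
  refine (Fintype.sum_equiv inv.toPerm _ _ fun L => ?_).symm
  simp only [Function.Involutive.coe_toPerm]
  by_cases hc : symmDiff H L = K
  · simp only [if_pos hc, cond_iffG, hc, if_true]
    congr 1
    have hs := signII H L h
    rw [hc] at hs
    linear_combination -c * hs
  · simp only [if_neg hc, cond_iffG, hc, if_false]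

lemma iteSplit {P : Prop} [Decidable P] (x y : ℍ) :
    (if P then x + y else 0) = (if P then x else 0) + (if P then y else 0) := by
  split_ifs <;> simp

lemma core (hD : IsOpen D) {F G : Finset (Fin n) → (Fin n → ℂ) → ℍ}
    (hF1 : StemC1 D F) (hG1 : StemC1 D G)
    (c : ℝ) (h : Fin n) (K : Finset (Fin n)) {z : Fin n → ℂ} (hz : z ∈ D) :
    fderiv ℝ (SP sigmaT F G K) z (Pi.single h 1)
      + (c * sigmaT K {h}) •
        fderiv ℝ (SP sigmaT F G (symmDiff K {h})) z (Pi.single h Complex.I)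
    = (∑ H : Finset (Fin n), ∑ L : Finset (Fin n), if symmDiff H L = K then
        sigmaT H L • ((fderiv ℝ (F H) z (Pi.single h 1)
          + (c * sigmaT H {h}) •
            fderiv ℝ (F (symmDiff H {h})) z (Pi.single h Complex.I)) * G L z) else 0)
      + (∑ H : Finset (Fin n), ∑ L : Finset (Fin n), if symmDiff H L = K then
        sigmaT H L • (F H z * (fderiv ℝ (G L) z (Pi.single h 1)
          + (c * sigmaT L {h}) •
            fderiv ℝ (G (symmDiff L {h})) z (Pi.single h Complex.I))) else 0) := by
  rw [SP_fderiv_apply sigmaT hD hF1 hG1 hz K (Pi.single h 1),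
    SP_fderiv_apply sigmaT hD hF1 hG1 hz (symmDiff K {h}) (Pi.single h Complex.I)]
  simp only [add_mul, mul_add, smul_mul_assoc, mul_smul_comm, smul_add, smul_smul,
    iteSplit, Finset.sum_add_distrib]
  rw [reindexF c h K
      (fun H L => fderiv ℝ (F H) z (Pi.single h Complex.I) * G L z),
    reindexG c h K
      (fun H L => F H z * fderiv ℝ (G L) z (Pi.single h Complex.I))]
  abel


lemma comp_plus (hD : IsOpen D) {F G : Finset (Fin n) → (Fin n → ℂ) → ℍ}
    (hF1 : StemC1 D F) (hG1 : StemC1 D G)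
    (h : Fin n) (K : Finset (Fin n)) {z : Fin n → ℂ} (hz : z ∈ D) :
    Dplus (SPT F G) h K z
      = SPT (fun K' => Dplus F h K') G K z + SPT F (fun K' => Dplus G h K') K z := by
  have hc := core hD hF1 hG1 1 h K hz
  simp only [one_mul, sigmaT] at hc
  simp only [Dplus, SPT, SP, sigmaT]
  rw [hc, smul_add]
  congr 1
  · rw [Finset.smul_sum]
    refine Finset.sum_congr rfl fun H _ => ?_
    rw [Finset.smul_sum]
    refine Finset.sum_congr rfl fun L _ => ?_
    split_ifs
    · rw [smul_mul_assoc, smul_comm]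
    · simp
  · rw [Finset.smul_sum]
    refine Finset.sum_congr rfl fun H _ => ?_
    rw [Finset.smul_sum]
    refine Finset.sum_congr rfl fun L _ => ?_
    split_ifs
    · rw [mul_smul_comm, smul_comm]
    · simp

lemma comp_minus (hD : IsOpen D) {F G : Finset (Fin n) → (Fin n → ℂ) → ℍ}
    (hF1 : StemC1 D F) (hG1 : StemC1 D G)
    (h : Fin n) (K : Finset (Fin n)) {z : Fin n → ℂ} (hz : z ∈ D) :
    Dminus (SPT F G) h K z
      = SPT (fun K' => Dminus F h K') G K z + SPT F (fun K' => Dminus G h K') K z := by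
  have hc := core hD hF1 hG1 (-1) h K hz
  simp only [neg_one_mul, sigmaT] at hc
  simp only [Dminus, SPT, SP, sigmaT, sub_eq_add_neg, ← neg_smul]
  rw [hc, smul_add]
  congr 1
  · rw [Finset.smul_sum]
    refine Finset.sum_congr rfl fun H _ => ?_
    rw [Finset.smul_sum]
    refine Finset.sum_congr rfl fun L _ => ?_
    split_ifs
    · rw [smul_mul_assoc, smul_comm]
    · simp
  · rw [Finset.smul_sum]
    refine Finset.sum_congr rfl fun H _ => ?_
    rw [Finset.smul_sum]
    refine Finset.sum_congr rfl fun L _ => ?_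
    split_ifs
    · rw [mul_smul_comm, smul_comm]
    · simp

end Aux13
/-- **Leibniz's rule for the slice tensor product.** -/
theorem stmt13 (n : ℕ) (hn : 0 < n) (D : Set (Fin n → ℂ)) (hne : D.Nonempty)
    (hinv : ConjInv D) (hD : IsOpen D)
    (F G : Finset (Fin n) → (Fin n → ℂ) → ℍ)
    (hF : IsStem D F) (hG : IsStem D G) (hF1 : StemC1 D F) (hG1 : StemC1 D G)
    (f g : (Fin n → ℍ) → ℍ) (hf : Induces D F f) (hg : Induces D G g) :
    ∀ h : Fin n, ∀ α β : Fin n → ℝ, ∀ J : Fin n → ℍ,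
      (∀ k, J k ∈ Sph) → zOf α β ∈ D →
      (∑ K : Finset (Fin n), JK J K * Dplus (SPT F G) h K (zOf α β) =
        ∑ K : Finset (Fin n), JK J K * SPT (fun K' => Dplus F h K') G K (zOf α β) +
          ∑ K : Finset (Fin n), JK J K * SPT F (fun K' => Dplus G h K') K (zOf α β)) ∧
      (∑ K : Finset (Fin n), JK J K * Dminus (SPT F G) h K (zOf α β) =
        ∑ K : Finset (Fin n), JK J K * SPT (fun K' => Dminus F h K') G K (zOf α β) +
          ∑ K : Finset (Fin n), JK J K * SPT F (fun K' => Dminus G h K') K (zOf α β)) := by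
  intro h α β J hJ hz
  constructor
  · calc ∑ K : Finset (Fin n), JK J K * Dplus (SPT F G) h K (zOf α β)
        = ∑ K : Finset (Fin n), (JK J K * SPT (fun K' => Dplus F h K') G K (zOf α β)
            + JK J K * SPT F (fun K' => Dplus G h K') K (zOf α β)) := by
          refine Finset.sum_congr rfl fun K _ => ?_
          rw [comp_plus hD hF1 hG1 h K hz, mul_add]
      _ = _ := Finset.sum_add_distrib
  · calc ∑ K : Finset (Fin n), JK J K * Dminus (SPT F G) h K (zOf α β)
        = ∑ K : Finset (Fin n), (JK J K * SPT (fun K' => Dminus F h K') G K (zOf α β)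
            + JK J K * SPT F (fun K' => Dminus G h K') K (zOf α β)) := by
          refine Finset.sum_congr rfl fun K _ => ?_
          rw [comp_minus hD hF1 hG1 h K hz, mul_add]
      _ = _ := Finset.sum_add_distrib
end
end
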